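/- arXiv:2001.03148 — 6 statements merged into one kernel-verified Lean document; each statement's English description precedes it below -/
import Mathlib

section
/- Under (H.ρ), for every ε > 0 the function H_ε is 1-Lipschitz with respect to the Euclidean norm: |H_ε(x) − H_ε(y)| ≤ ‖x − y‖ for all x, y ∈ ℝ^K. -/
open scoped BigOperators

lemma coord_abs_le_norm {K : ℕ} (a : EuclideanSpace ℝ (Fin K)) (k : Fin K) :
    |a k| ≤ ‖a‖ := by
  rw [EuclideanSpace.norm_eq]
  have h1 : |a k| = Real.sqrt (|a k| ^ 2) := by
    rw [Real.sqrt_sq (abs_nonneg _)]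
  rw [h1]
  apply Real.sqrt_le_sqrt
  exact Finset.single_le_sum (f := fun i => |a i| ^ 2)
    (fun i _ => sq_nonneg _) (Finset.mem_univ k)

lemma sup_sub_le {K : ℕ} (hK : 0 < K) (a b : EuclideanSpace ℝ (Fin K)) :
    (⨆ k, a k) ≤ (⨆ k, b k) + ‖a - b‖ := by
  haveI : Nonempty (Fin K) := Fin.pos_iff_nonempty.mp hK
  apply ciSup_le
  intro k
  have h1 : a k ≤ b k + |a k - b k| := by
    have := le_abs_self (a k - b k); linarith
  have h2 : |a k - b k| ≤ ‖a - b‖ := by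
    have := coord_abs_le_norm (a - b) k
    simpa using this
  have h3 : b k ≤ ⨆ k, b k := le_ciSup (Set.Finite.bddAbove (Set.finite_range _)) k
  linarith

lemma H_lip_one_sided {K : ℕ} (hK : 0 < K)
    (H : EuclideanSpace ℝ (Fin K) → ℝ) (c₀ : ℝ) (hc₀ : 0 < c₀)
    (hconv : ConvexOn ℝ Set.univ H)
    (hH : ∀ x : EuclideanSpace ℝ (Fin K),
      H x - c₀ ≤ (⨆ k, x k) ∧ (⨆ k, x k) ≤ H x)
    (x y : EuclideanSpace ℝ (Fin K)) :
    H y - H x ≤ ‖y - x‖ := by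
  have key : ∀ δ : ℝ, 0 < δ → H y - H x ≤ ‖y - x‖ + δ := by
    intro δ hδ
    set t : ℝ := min 1 (δ / c₀) with ht_def
    have ht0 : 0 < t := lt_min one_pos (div_pos hδ hc₀)
    have ht1 : t ≤ 1 := min_le_left _ _
    have htδ : t * c₀ ≤ δ := by
      have : t ≤ δ / c₀ := min_le_right _ _
      calc t * c₀ ≤ (δ / c₀) * c₀ := by nlinarith
        _ = δ := div_mul_cancel₀ δ hc₀.ne'
    set z : EuclideanSpace ℝ (Fin K) := x + t⁻¹ • (y - x) with hz_def
    have hy : y = (1 - t) • x + t • z := by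
      rw [hz_def]
      rw [smul_add, smul_smul, mul_inv_cancel₀ ht0.ne']
      module
    have hconv' : H y ≤ (1 - t) * H x + t * H z := by
      calc H y = H ((1 - t) • x + t • z) := by rw [← hy]
        _ ≤ (1 - t) * H x + t * H z :=
          hconv.2 (Set.mem_univ x) (Set.mem_univ z) (by linarith) (le_of_lt ht0) (by ring)
    have hHz : H z - H x ≤ ‖z - x‖ + c₀ := by
      have h1 := (hH z).1
      have h2 := (hH x).2
      have h3 := sup_sub_le hK z x
      linarith
    have hzx : ‖z - x‖ = t⁻¹ * ‖y - x‖ := by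
      rw [hz_def]
      have : x + t⁻¹ • (y - x) - x = t⁻¹ • (y - x) := by abel
      rw [this, norm_smul, Real.norm_eq_abs, abs_of_pos (inv_pos.mpr ht0)]
    have : H y - H x ≤ t * (H z - H x) := by nlinarith
    have h4 : t * (H z - H x) ≤ t * (‖z - x‖ + c₀) := by nlinarith
    have h5 : t * (‖z - x‖ + c₀) = ‖y - x‖ + t * c₀ := by
      rw [hzx, mul_add, ← mul_assoc, mul_inv_cancel₀ ht0.ne', one_mul]
    linarith
  by_contra hcon
  push_neg at hcon
  have := key ((H y - H x - ‖y - x‖) / 2) (by linarith)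
  linarith

/-- Under (H.ρ), for every `ε > 0` the function `H_ε(x) = ε H(ε⁻¹ x)` is
`1`-Lipschitz with respect to the Euclidean norm. -/
theorem scaled_smoothing_one_lipschitz (K : ℕ) (hK : 0 < K)
    (H : EuclideanSpace ℝ (Fin K) → ℝ) (c₀ : ℝ) (hc₀ : 0 < c₀)
    (hconv : ConvexOn ℝ Set.univ H) (hsmooth : ContDiff ℝ 2 H)
    (hH : ∀ x : EuclideanSpace ℝ (Fin K),
      H x - c₀ ≤ (⨆ k, x k) ∧ (⨆ k, x k) ≤ H x)
    (ε : ℝ) (hε : 0 < ε) (x y : EuclideanSpace ℝ (Fin K)) :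
    |ε * H (ε⁻¹ • x) - ε * H (ε⁻¹ • y)| ≤ ‖x - y‖ := by
  have key : ∀ a b : EuclideanSpace ℝ (Fin K),
      ε * H (ε⁻¹ • a) - ε * H (ε⁻¹ • b) ≤ ‖a - b‖ := by
    intro a b
    have h := H_lip_one_sided hK H c₀ hc₀ hconv hH (ε⁻¹ • b) (ε⁻¹ • a)
    have hn : ‖ε⁻¹ • a - ε⁻¹ • b‖ = ε⁻¹ * ‖a - b‖ := by
      rw [← smul_sub, norm_smul, Real.norm_eq_abs, abs_of_pos (inv_pos.mpr hε)]
    rw [hn] at h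
    have := mul_le_mul_of_nonneg_left h hε.le
    calc ε * H (ε⁻¹ • a) - ε * H (ε⁻¹ • b) = ε * (H (ε⁻¹ • a) - H (ε⁻¹ • b)) := by ring
      _ ≤ ε * (ε⁻¹ * ‖a - b‖) := this
      _ = ‖a - b‖ := by field_simp
  rw [abs_sub_le_iff]
  constructor
  · exact key x y
  · rw [show ‖x - y‖ = ‖y - x‖ from norm_sub_rev x y]; exact key y x
end

section
/- Suppose that for each k ∈ {1,…,K} the maps b_k : ℝⁿ → ℝⁿ and σ_k : ℝⁿ → ℝ^{n×n} satisfy σ_k(x) σ_k(x)ᵀ ≥ ν Iₙ (in the sense of symmetric matrices) for all x ∈ ℝⁿ, and Σ_{i,j} |σ_k^{ij}|_{0,1;ℝⁿ} + Σ_i |b_k^i|_{0,1;ℝⁿ} ≤ Λ, where ν, Λ > 0. Then there exist unique functions b̃ : ℝⁿ × Δ_K → ℝⁿ and σ̃ : ℝⁿ × Δ_K → S^n_> (the symmetric positive-definite n×n matrices) such that for all x ∈ ℝⁿ and λ ∈ Δ_K: b̃(x,λ) = Σ_{k=1}^K b_k(x) λ_k and σ̃(x,λ) σ̃(x,λ)ᵀ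 = Σ_{k=1}^K σ_k(x) σ_k(x)ᵀ λ_k. Moreover there exists a constant Λ' > 0 such that for all x ∈ ℝⁿ and λ ∈ Δ_K: σ̃(x,λ) ≥ √ν Iₙ and Σ_{i,j} |σ̃^{ij}(·,λ)|_{0,1;ℝⁿ} + Σ_i |b̃^i(·,λ)|_{0,1;ℝⁿ} ≤ Λ'. -/
open scoped BigOperators
open Matrix

section helpers
variable {n : ℕ}

lemma herm_transpose_eq {M : Matrix (Fin n) (Fin n) ℝ} (h : M.IsHermitian) : Mᵀ = M := by
  simpa [Matrix.conjTranspose_eq_transpose_of_trivial, Matrix.IsSymm] using h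

lemma psd_smul {M : Matrix (Fin n) (Fin n) ℝ} (h : M.PosSemidef) {c : ℝ} (hc : 0 ≤ c) :
    (c • M).PosSemidef := by
  refine ⟨?_, fun x => ?_⟩
  · unfold Matrix.IsHermitian at *
    simp only [Matrix.transpose_smul, Matrix.conjTranspose_eq_transpose_of_trivial] at *
    rw [show Mᵀ = M from h.1]
  · exact (h.smul hc).2 x

lemma psd_sum {ι : Type*} (s : Finset ι) (f : ι → Matrix (Fin n) (Fin n) ℝ)
    (h : ∀ i ∈ s, (f i).PosSemidef) : (∑ i ∈ s, f i).PosSemidef :=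
  Finset.sum_induction f _ (fun _ _ ha hb => ha.add hb) Matrix.PosSemidef.zero h

lemma entry_eq {E : Matrix (Fin n) (Fin n) ℝ} (hE : E.IsHermitian) (i j : Fin n) :
    E i j = ∑ t, hE.eigenvectorUnitary.1 i t * hE.eigenvalues t * hE.eigenvectorUnitary.1 j t := by
  conv_lhs => rw [hE.spectral_theorem]
  simp [Matrix.mul_apply, Matrix.diagonal_apply, Finset.sum_ite_eq, mul_comm]
end helpers

section helpers2
variable {n : ℕ}

lemma unitary_row_sq {E : Matrix (Fin n) (Fin n) ℝ} (hE : E.IsHermitian) (i : Fin n) :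
    ∑ t, (hE.eigenvectorUnitary.1 i t)^2 = 1 := by
  have h1 := Matrix.mem_unitaryGroup_iff.mp hE.eigenvectorUnitary.2
  have h2 := congrArg (fun M : Matrix (Fin n) (Fin n) ℝ => M i i) h1
  simpa [Matrix.mul_apply, Matrix.one_apply, Matrix.star_apply, sq] using h2

lemma entry_abs_le {E : Matrix (Fin n) (Fin n) ℝ} (hE : E.IsHermitian) {c : ℝ}
    (hc : ∀ t, |hE.eigenvalues t| ≤ c) (i j : Fin n) : |E i j| ≤ c := by
  have h0 : 0 ≤ c := le_trans (abs_nonneg _) (hc i)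
  set U := hE.eigenvectorUnitary.1 with hU
  rw [entry_eq hE i j]
  have cs := Finset.sum_mul_sq_le_sq_mul_sq Finset.univ (fun t => |U i t|) (fun t => |U j t|)
  have hrow : (∑ t, |U i t|^2) = 1 := by simpa [sq_abs, hU] using unitary_row_sq hE i
  have hrow' : (∑ t, |U j t|^2) = 1 := by simpa [sq_abs, hU] using unitary_row_sq hE j
  rw [hrow, hrow', one_mul] at cs
  have hsumnn : 0 ≤ ∑ t, |U i t| * |U j t| :=
    Finset.sum_nonneg fun t _ => mul_nonneg (abs_nonneg _) (abs_nonneg _)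
  have hcs1 : ∑ t, |U i t| * |U j t| ≤ 1 := by nlinarith
  calc |∑ t, U i t * hE.eigenvalues t * U j t|
      ≤ ∑ t, |U i t * hE.eigenvalues t * U j t| := Finset.abs_sum_le_sum_abs _ _
    _ ≤ ∑ t, |U i t| * |U j t| * c := by
        refine Finset.sum_le_sum fun t _ => ?_
        rw [abs_mul, abs_mul]
        calc |U i t| * |hE.eigenvalues t| * |U j t|
            ≤ |U i t| * c * |U j t| :=
              mul_le_mul_of_nonneg_right
                (mul_le_mul_of_nonneg_left (hc t) (abs_nonneg _)) (abs_nonneg _)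
          _ = |U i t| * |U j t| * c := by ring
    _ = (∑ t, |U i t| * |U j t|) * c := by rw [Finset.sum_mul]
    _ ≤ 1 * c := by nlinarith
    _ = c := one_mul c

lemma eigenbasis_dot_self {E : Matrix (Fin n) (Fin n) ℝ} (hE : E.IsHermitian) (t : Fin n) :
    (⇑(hE.eigenvectorBasis t) : Fin n → ℝ) ⬝ᵥ ⇑(hE.eigenvectorBasis t) = 1 := by
  have h1 : ‖hE.eigenvectorBasis t‖ = 1 := hE.eigenvectorBasis.orthonormal.1 t
  rw [EuclideanSpace.norm_eq] at h1
  have h2 : ∑ i, ‖hE.eigenvectorBasis t i‖^2 = 1 := by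
    have hnn : 0 ≤ ∑ i, ‖hE.eigenvectorBasis t i‖^2 :=
      Finset.sum_nonneg fun i _ => sq_nonneg _
    rw [← Real.sq_sqrt hnn, h1]; norm_num
  simpa [dotProduct, Real.norm_eq_abs, sq_abs, sq, mul_comm] using h2

lemma dot_sub_smul_one (M : Matrix (Fin n) (Fin n) ℝ) (v : Fin n → ℝ) (hv : v ⬝ᵥ v = 1) (c : ℝ) :
    v ⬝ᵥ ((M - c • (1 : Matrix (Fin n) (Fin n) ℝ)) *ᵥ v) = v ⬝ᵥ (M *ᵥ v) - c := by
  simp [Matrix.sub_mulVec, Matrix.smul_mulVec, dotProduct_sub, dotProduct_smul,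
    smul_eq_mul, hv]

lemma psd_of_eigen_lb {E : Matrix (Fin n) (Fin n) ℝ} (hE : E.IsHermitian) {c : ℝ}
    (h : ∀ t, c ≤ hE.eigenvalues t) :
    (E - c • (1 : Matrix (Fin n) (Fin n) ℝ)).PosSemidef := by
  have hdiag : Matrix.PosSemidef
      (Matrix.diagonal (fun t => hE.eigenvalues t - c) : Matrix (Fin n) (Fin n) ℝ) :=
    Matrix.PosSemidef.diagonal (fun t => sub_nonneg.mpr (h t))
  have key := hdiag.mul_mul_conjTranspose_same hE.eigenvectorUnitary.1
  have hUU : hE.eigenvectorUnitary.1 * star hE.eigenvectorUnitary.1 = 1 :=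
    Matrix.mem_unitaryGroup_iff.mp hE.eigenvectorUnitary.2
  have hdd : (Matrix.diagonal (fun t => hE.eigenvalues t - c) : Matrix (Fin n) (Fin n) ℝ)
      = Matrix.diagonal (RCLike.ofReal ∘ hE.eigenvalues) - c • (1 : Matrix (Fin n) (Fin n) ℝ) := by
    ext i j
    by_cases hij : i = j <;> simp [Matrix.diagonal_apply, hij, Matrix.one_apply]
  have heq : hE.eigenvectorUnitary.1 * (Matrix.diagonal (fun t => hE.eigenvalues t - c))
      * (hE.eigenvectorUnitary.1)ᴴ = E - c • 1 := by
    rw [hdd, Matrix.mul_sub, Matrix.sub_mul, ← Matrix.star_eq_conjTranspose]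
    rw [Matrix.mul_smul, Matrix.smul_mul, Matrix.mul_one, hUU]
    conv_rhs => rw [hE.spectral_theorem]
    rw [Unitary.conjStarAlgAut_apply]
  rwa [heq] at key

lemma posdef_of_sub_psd {M : Matrix (Fin n) (Fin n) ℝ} {c : ℝ} (hc : 0 < c)
    (h : (M - c • (1 : Matrix (Fin n) (Fin n) ℝ)).PosSemidef) : M.PosDef := by
  refine Matrix.posDef_iff_dotProduct_mulVec.mpr ⟨?_, ?_⟩
  · have h1 := h.1
    rw [show M = (M - c • 1) + c • (1 : Matrix (Fin n) (Fin n) ℝ) from (sub_add_cancel _ _).symm]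
    unfold Matrix.IsHermitian at *
    rw [Matrix.conjTranspose_add, h1]
    congr 1
    simp [Matrix.conjTranspose_smul]
  · intro x hx
    have h2 := h.dotProduct_mulVec_nonneg x
    have hxx : 0 < x ⬝ᵥ x := by
      have h0 : x ⬝ᵥ x ≠ 0 := fun hc0 => hx (dotProduct_self_eq_zero.mp hc0)
      have hnn : 0 ≤ x ⬝ᵥ x := Finset.sum_nonneg fun i _ => mul_self_nonneg _
      exact lt_of_le_of_ne hnn (Ne.symm h0)
    have h3 : x ⬝ᵥ ((M - c • (1 : Matrix (Fin n) (Fin n) ℝ)) *ᵥ x)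
        = x ⬝ᵥ (M *ᵥ x) - c * (x ⬝ᵥ x) := by
      simp [Matrix.sub_mulVec, Matrix.smul_mulVec, dotProduct_sub, dotProduct_smul,
        smul_eq_mul]
    simp only [star_trivial] at h2 ⊢
    have := mul_pos hc hxx
    linarith
end helpers2

namespace Matrix.PosSemidef
section sqrtPort
open scoped MatrixOrder
variable {n : ℕ} {A : Matrix (Fin n) (Fin n) ℝ}
noncomputable def sqrt (_hA : A.PosSemidef) : Matrix (Fin n) (Fin n) ℝ := CFC.sqrt A
lemma posSemidef_sqrt (hA : A.PosSemidef) : hA.sqrt.PosSemidef :=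
  Matrix.nonneg_iff_posSemidef.mp (CFC.sqrt_nonneg A)
lemma sqrt_mul_self (hA : A.PosSemidef) : hA.sqrt * hA.sqrt = A :=
  CFC.sqrt_mul_sqrt_self A (Matrix.nonneg_iff_posSemidef.mpr hA)
lemma eq_sqrt_of_sq_eq (hA : A.PosSemidef) {B : Matrix (Fin n) (Fin n) ℝ} (hB : B.PosSemidef)
    (h : A ^ 2 = B) : A = hB.sqrt := by
  unfold sqrt
  rw [eq_comm, CFC.sqrt_eq_iff B A (Matrix.nonneg_iff_posSemidef.mpr hB)
    (Matrix.nonneg_iff_posSemidef.mpr hA), ← h, sq]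
end sqrtPort
end Matrix.PosSemidef

section helpers3
variable {n : ℕ}

lemma sqrt_eigen_lb {A : Matrix (Fin n) (Fin n) ℝ} (hA : A.PosSemidef) {ν : ℝ}
    (hν : 0 ≤ ν) (h : (A - ν • (1 : Matrix (Fin n) (Fin n) ℝ)).PosSemidef) :
    (hA.sqrt - Real.sqrt ν • (1 : Matrix (Fin n) (Fin n) ℝ)).PosSemidef := by
  have hS := hA.posSemidef_sqrt
  apply psd_of_eigen_lb hS.1
  intro t
  set v : Fin n → ℝ := ⇑(hS.1.eigenvectorBasis t) with hvdef
  have hv : v ⬝ᵥ v = 1 := eigenbasis_dot_self hS.1 t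
  set μ := hS.1.eigenvalues t with hμdef
  have hev : hA.sqrt *ᵥ v = μ • v := hS.1.mulVec_eigenvectorBasis t
  have hAv : A *ᵥ v = (μ * μ) • v := by
    rw [← hA.sqrt_mul_self, ← Matrix.mulVec_mulVec, hev, Matrix.mulVec_smul, hev, smul_smul]
  have h2 := h.dotProduct_mulVec_nonneg v
  rw [star_trivial, dot_sub_smul_one _ _ hv, hAv, dotProduct_smul, smul_eq_mul, hv, mul_one] at h2
  have hμ0 : 0 ≤ μ := hS.eigenvalues_nonneg t
  have hle : Real.sqrt ν ≤ Real.sqrt (μ * μ) := Real.sqrt_le_sqrt (by linarith)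
  rwa [← sq, Real.sqrt_sq hμ0] at hle

lemma herm_entry_symm {S : Matrix (Fin n) (Fin n) ℝ} (hS : S.IsHermitian) (i r : Fin n) :
    S r i = S i r := by
  have := congrFun (congrFun (herm_transpose_eq hS) i) r
  simpa [Matrix.transpose_apply] using this

lemma sqrt_entry_bound {S : Matrix (Fin n) (Fin n) ℝ} (hS : S.IsHermitian) {a : ℝ}
    (h : ∀ i, (S * S) i i ≤ a) (i j : Fin n) : |S i j| ≤ Real.sqrt a := by
  have hdiag : (S * S) i i = ∑ r, (S i r)^2 := by
    rw [Matrix.mul_apply]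
    refine Finset.sum_congr rfl fun r _ => ?_
    rw [herm_entry_symm hS i r, sq]
  have h1 : (S i j)^2 ≤ (S * S) i i := by
    rw [hdiag]
    exact Finset.single_le_sum (f := fun r => (S i r)^2) (fun r _ => sq_nonneg _) (Finset.mem_univ j)
  have h2 := Real.sqrt_le_sqrt (h1.trans (h i))
  rwa [Real.sqrt_sq_eq_abs] at h2

lemma sqrt_diff_entry_bound {S T D : Matrix (Fin n) (Fin n) ℝ}
    (hS : S.PosSemidef) (hT : T.PosSemidef) {r : ℝ} (hr : 0 < r)
    (hS2 : (S - r • (1 : Matrix (Fin n) (Fin n) ℝ)).PosSemidef)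
    (hT2 : (T - r • (1 : Matrix (Fin n) (Fin n) ℝ)).PosSemidef)
    (hD : S * S - T * T = D) {bd : ℝ} (hbd : ∀ p q, |D p q| ≤ bd) (i j : Fin n) :
    |S i j - T i j| ≤ ((n : ℝ)^2 * bd) / (2 * r) := by
  have hbd0 : 0 ≤ bd := le_trans (abs_nonneg _) (hbd i j)
  have hE : (S - T).IsHermitian := hS.1.sub hT.1
  have key : ∀ t, |hE.eigenvalues t| ≤ ((n : ℝ)^2 * bd) / (2 * r) := by
    intro t
    set v : Fin n → ℝ := ⇑(hE.eigenvectorBasis t) with hvdef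
    have hv : v ⬝ᵥ v = 1 := eigenbasis_dot_self hE t
    set μ := hE.eigenvalues t with hμdef
    have hev : (S - T) *ᵥ v = μ • v := hE.mulVec_eigenvectorBasis t
    have hq1 : r ≤ v ⬝ᵥ (S *ᵥ v) := by
      have h5 := hS2.dotProduct_mulVec_nonneg v; rw [star_trivial, dot_sub_smul_one _ _ hv] at h5; linarith
    have hq2 : r ≤ v ⬝ᵥ (T *ᵥ v) := by
      have h5 := hT2.dotProduct_mulVec_nonneg v; rw [star_trivial, dot_sub_smul_one _ _ hv] at h5; linarith
    have hvp : ∀ p, |v p| ≤ 1 := by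
      intro p
      refine abs_le_one_iff_mul_self_le_one.mpr ?_
      have h6 : v p * v p ≤ v ⬝ᵥ v :=
        Finset.single_le_sum (fun q _ => mul_self_nonneg (v q)) (Finset.mem_univ p)
      rwa [hv] at h6
    have hdec : D *ᵥ v = S *ᵥ ((S - T) *ᵥ v) + (S - T) *ᵥ (T *ᵥ v) := by
      rw [Matrix.mulVec_mulVec, Matrix.mulVec_mulVec, ← Matrix.add_mulVec, ← hD]
      congr 1
      noncomm_ring
    have hvE : v ᵥ* (S - T) = μ • v := by
      conv_lhs => rw [← herm_transpose_eq hE]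
      rw [Matrix.vecMul_transpose, hev]
    have hform : v ⬝ᵥ (D *ᵥ v) = μ * (v ⬝ᵥ (S *ᵥ v)) + μ * (v ⬝ᵥ (T *ᵥ v)) := by
      rw [hdec, dotProduct_add]
      congr 1
      · rw [hev, Matrix.mulVec_smul, dotProduct_smul, smul_eq_mul]
      · rw [Matrix.dotProduct_mulVec, hvE, smul_dotProduct, smul_eq_mul]
    have hrowbd : ∀ p, |v p * ∑ q, D p q * v q| ≤ (n : ℝ) * bd := by
      intro p
      have h1 : |∑ q, D p q * v q| ≤ (n : ℝ) * bd := by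
        calc |∑ q, D p q * v q| ≤ ∑ q, |D p q * v q| := Finset.abs_sum_le_sum_abs _ _
          _ ≤ ∑ _q : Fin n, bd := by
              refine Finset.sum_le_sum fun q _ => ?_
              rw [abs_mul]
              calc |D p q| * |v q| ≤ bd * 1 :=
                    mul_le_mul (hbd p q) (hvp q) (abs_nonneg _) hbd0
                _ = bd := mul_one bd
          _ = (n : ℝ) * bd := by
              rw [Finset.sum_const, Finset.card_univ, Fintype.card_fin, nsmul_eq_mul]
      rw [abs_mul]
      calc |v p| * |∑ q, D p q * v q| ≤ 1 * ((n : ℝ) * bd) :=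
            mul_le_mul (hvp p) h1 (abs_nonneg _) zero_le_one
        _ = (n : ℝ) * bd := one_mul _
    have habs : |v ⬝ᵥ (D *ᵥ v)| ≤ (n : ℝ)^2 * bd := by
      have heq : v ⬝ᵥ (D *ᵥ v) = ∑ p, v p * ∑ q, D p q * v q := by
        simp [dotProduct, Matrix.mulVec]
      rw [heq]
      calc |∑ p, v p * ∑ q, D p q * v q| ≤ ∑ p, |v p * ∑ q, D p q * v q| :=
            Finset.abs_sum_le_sum_abs _ _
        _ ≤ ∑ _p : Fin n, (n : ℝ) * bd := Finset.sum_le_sum fun p _ => hrowbd p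
        _ = (n : ℝ)^2 * bd := by
            rw [Finset.sum_const, Finset.card_univ, Fintype.card_fin, nsmul_eq_mul]; ring
    have h2r : (0 : ℝ) < 2 * r := by linarith
    rw [le_div_iff₀ h2r]
    have e2 : |μ| * (2 * r) ≤ |μ| * (v ⬝ᵥ (S *ᵥ v) + v ⬝ᵥ (T *ᵥ v)) :=
      mul_le_mul_of_nonneg_left (by linarith) (abs_nonneg _)
    have e3 : |μ| * (v ⬝ᵥ (S *ᵥ v) + v ⬝ᵥ (T *ᵥ v)) = |v ⬝ᵥ (D *ᵥ v)| := by
      rw [hform, ← mul_add, abs_mul, abs_of_nonneg (by linarith :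
        (0:ℝ) ≤ v ⬝ᵥ (S *ᵥ v) + v ⬝ᵥ (T *ᵥ v))]
    linarith
  have := entry_abs_le hE key i j
  simpa [Matrix.sub_apply] using this

end helpers3

lemma euclid_sum_apply {n K : ℕ} (c : Fin K → ℝ) (v : Fin K → EuclideanSpace ℝ (Fin n))
    (i : Fin n) : (∑ k, c k • v k) i = ∑ k, c k * (v k i) := by
  induction (Finset.univ : Finset (Fin K)) using Finset.induction with
  | empty => simp
  | insert _ _ h ih => rw [Finset.sum_insert h, Finset.sum_insert h, ← ih]; rfl

section main
set_option maxHeartbeats 1000000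

/-- The probability simplex `Δ_K`, as a subtype of `ℝ^K`. -/
def SimplexT (K : ℕ) : Type :=
  {l : Fin K → ℝ // (∑ k, l k) = 1 ∧ ∀ k, 0 ≤ l k}

/-- If each `b_k` and `σ_k` satisfy uniform ellipticity `σ_k σ_kᵀ ≥ ν Iₙ`
and the `C^{0,1}`-norm bound `Σ_{i,j}|σ_k^{ij}|_{0,1} + Σ_i|b_k^i|_{0,1} ≤ Λ`, then there
exist unique `b̃ : ℝⁿ × Δ_K → ℝⁿ` and `σ̃ : ℝⁿ × Δ_K → 𝕊^n_>` with
`b̃(x,λ) = Σ_k b_k(x) λ_k` and `σ̃ σ̃ᵀ = Σ_k σ_k σ_kᵀ λ_k`; moreover there is `Λ' > 0`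
with `σ̃(x,λ) ≥ √ν Iₙ` and `Σ_{i,j}|σ̃^{ij}(·,λ)|_{0,1} + Σ_i|b̃^i(·,λ)|_{0,1} ≤ Λ'`. -/
theorem relaxed_coefficients_exist_unique (n K : ℕ) (hn : 0 < n) (hK : 0 < K)
    (ν Λ : ℝ) (hν : 0 < ν) (hΛ : 0 < Λ)
    (b : Fin K → EuclideanSpace ℝ (Fin n) → EuclideanSpace ℝ (Fin n))
    (σ : Fin K → EuclideanSpace ℝ (Fin n) → Matrix (Fin n) (Fin n) ℝ)
    (hell : ∀ k x, ((σ k x) * (σ k x)ᵀ - ν • (1 : Matrix (Fin n) (Fin n) ℝ)).PosSemidef)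
    (hbound : ∀ k, ∃ (SA LA : Fin n → Fin n → ℝ) (SB LB : Fin n → ℝ),
      (∀ i j, 0 ≤ SA i j ∧ 0 ≤ LA i j ∧
        (∀ x, |σ k x i j| ≤ SA i j) ∧
        (∀ x y, |σ k x i j - σ k y i j| ≤ LA i j * ‖x - y‖)) ∧
      (∀ i, 0 ≤ SB i ∧ 0 ≤ LB i ∧
        (∀ x, |b k x i| ≤ SB i) ∧
        (∀ x y, |b k x i - b k y i| ≤ LB i * ‖x - y‖)) ∧
      ((∑ i, ∑ j, (SA i j + LA i j)) + ∑ i, (SB i + LB i)) ≤ Λ) :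
    ∃ (bt : EuclideanSpace ℝ (Fin n) → SimplexT K → EuclideanSpace ℝ (Fin n))
      (σt : EuclideanSpace ℝ (Fin n) → SimplexT K → Matrix (Fin n) (Fin n) ℝ),
      (∀ x l, bt x l = ∑ k, (l.1 k) • b k x) ∧
      (∀ x l, (σt x l).PosDef ∧
        (σt x l) * (σt x l)ᵀ = ∑ k, (l.1 k) • ((σ k x) * (σ k x)ᵀ)) ∧
      (∀ (bt' : EuclideanSpace ℝ (Fin n) → SimplexT K → EuclideanSpace ℝ (Fin n))
         (σt' : EuclideanSpace ℝ (Fin n) → SimplexT K → Matrix (Fin n) (Fin n) ℝ),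
        (∀ x l, bt' x l = ∑ k, (l.1 k) • b k x) →
        (∀ x l, (σt' x l).PosDef ∧
          (σt' x l) * (σt' x l)ᵀ = ∑ k, (l.1 k) • ((σ k x) * (σ k x)ᵀ)) →
        bt' = bt ∧ σt' = σt) ∧
      (∃ Λ' > (0:ℝ), ∀ l : SimplexT K,
        (∀ x, ((σt x l) - Real.sqrt ν • (1 : Matrix (Fin n) (Fin n) ℝ)).PosSemidef) ∧
        ∃ (SA LA : Fin n → Fin n → ℝ) (SB LB : Fin n → ℝ),
          (∀ i j, 0 ≤ SA i j ∧ 0 ≤ LA i j ∧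
            (∀ x, |σt x l i j| ≤ SA i j) ∧
            (∀ x y, |σt x l i j - σt y l i j| ≤ LA i j * ‖x - y‖)) ∧
          (∀ i, 0 ≤ SB i ∧ 0 ≤ LB i ∧
            (∀ x, |bt x l i| ≤ SB i) ∧
            (∀ x y, |bt x l i - bt y l i| ≤ LB i * ‖x - y‖)) ∧
          ((∑ i, ∑ j, (SA i j + LA i j)) + ∑ i, (SB i + LB i)) ≤ Λ') := by
  classical
  choose SA LA SB LB hσb hbb hsum using hbound
  have hl0 : ∀ l : SimplexT K, ∀ k, 0 ≤ l.1 k := fun l => l.2.2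
  have hl1 : ∀ l : SimplexT K, ∀ k, l.1 k ≤ 1 := by
    intro l k
    calc l.1 k ≤ ∑ k', l.1 k' :=
        Finset.single_le_sum (f := fun k' => l.1 k') (fun k' _ => hl0 l k') (Finset.mem_univ k)
      _ = 1 := l.2.1
  have hSAnn : ∀ k i j, 0 ≤ SA k i j := fun k i j => (hσb k i j).1
  have hLAnn : ∀ k i j, 0 ≤ LA k i j := fun k i j => (hσb k i j).2.1
  have hkey : ∀ k i j, SA k i j + LA k i j ≤ Λ := by
    intro k i j
    have h1 : SA k i j + LA k i j ≤ ∑ j', (SA k i j' + LA k i j') :=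
      Finset.single_le_sum (f := fun j' => SA k i j' + LA k i j')
        (fun j' _ => add_nonneg (hSAnn k i j') (hLAnn k i j')) (Finset.mem_univ j)
    have h2 : (∑ j', (SA k i j' + LA k i j')) ≤ ∑ i', ∑ j', (SA k i' j' + LA k i' j') :=
      Finset.single_le_sum (f := fun i' => ∑ j', (SA k i' j' + LA k i' j'))
        (fun i' _ => Finset.sum_nonneg fun j' _ =>
          add_nonneg (hSAnn k i' j') (hLAnn k i' j')) (Finset.mem_univ i)
    have h3 : 0 ≤ ∑ i', (SB k i' + LB k i') :=
      Finset.sum_nonneg fun i' _ => add_nonneg (hbb k i').1 (hbb k i').2.1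
    have h4 := hsum k
    linarith
  have hSAΛ : ∀ k i j, SA k i j ≤ Λ := fun k i j => by
    have := hkey k i j; have := hLAnn k i j; linarith
  have hLAΛ : ∀ k i j, LA k i j ≤ Λ := fun k i j => by
    have := hkey k i j; have := hSAnn k i j; linarith
  have hσsup : ∀ k x i j, |σ k x i j| ≤ Λ := fun k x i j =>
    le_trans ((hσb k i j).2.2.1 x) (hSAΛ k i j)
  have hσlip : ∀ k (x y : EuclideanSpace ℝ (Fin n)) i j,
      |σ k x i j - σ k y i j| ≤ Λ * ‖x - y‖ := fun k x y i j =>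
    le_trans ((hσb k i j).2.2.2 x y) (mul_le_mul_of_nonneg_right (hLAΛ k i j) (norm_nonneg _))
  -- entries of σσᵀ
  have hprod_sup : ∀ k (x : EuclideanSpace ℝ (Fin n)) p q,
      |((σ k x) * (σ k x)ᵀ) p q| ≤ (n : ℝ) * Λ^2 := by
    intro k x p q
    rw [Matrix.mul_apply]
    calc |∑ r, σ k x p r * (σ k x)ᵀ r q| ≤ ∑ r, |σ k x p r * σ k x q r| := by
          simpa [Matrix.transpose_apply] using
            Finset.abs_sum_le_sum_abs (fun r => σ k x p r * σ k x q r) Finset.univ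
      _ ≤ ∑ _r : Fin n, Λ^2 := by
          refine Finset.sum_le_sum fun r _ => ?_
          rw [abs_mul, sq]
          exact mul_le_mul (hσsup k x p r) (hσsup k x q r) (abs_nonneg _) hΛ.le
      _ = (n : ℝ) * Λ^2 := by
          rw [Finset.sum_const, Finset.card_univ, Fintype.card_fin, nsmul_eq_mul]
  have hprod_lip : ∀ k (x y : EuclideanSpace ℝ (Fin n)) p q,
      |((σ k x) * (σ k x)ᵀ) p q - ((σ k y) * (σ k y)ᵀ) p q| ≤ 2 * (n : ℝ) * Λ^2 * ‖x - y‖ := by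
    intro k x y p q
    rw [Matrix.mul_apply, Matrix.mul_apply, ← Finset.sum_sub_distrib]
    calc |∑ r, (σ k x p r * (σ k x)ᵀ r q - σ k y p r * (σ k y)ᵀ r q)|
        ≤ ∑ r, |σ k x p r * σ k x q r - σ k y p r * σ k y q r| := by
          simpa [Matrix.transpose_apply] using
            Finset.abs_sum_le_sum_abs
              (fun r => σ k x p r * σ k x q r - σ k y p r * σ k y q r) Finset.univ
      _ ≤ ∑ _r : Fin n, 2 * Λ^2 * ‖x - y‖ := by
          refine Finset.sum_le_sum fun r _ => ?_
          have e1 : σ k x p r * σ k x q r - σ k y p r * σ k y q r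
              = σ k x p r * (σ k x q r - σ k y q r) + (σ k x p r - σ k y p r) * σ k y q r := by
            ring
          rw [e1]
          calc |σ k x p r * (σ k x q r - σ k y q r) + (σ k x p r - σ k y p r) * σ k y q r|
              ≤ |σ k x p r * (σ k x q r - σ k y q r)| + |(σ k x p r - σ k y p r) * σ k y q r| :=
                abs_add_le _ _
            _ ≤ Λ * (Λ * ‖x - y‖) + Λ * ‖x - y‖ * Λ := by
                rw [abs_mul, abs_mul]
                gcongr
                · exact hσsup k x p r
                · exact hσlip k x y q r
                · exact hσlip k x y p r
                · exact hσsup k y q r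
            _ = 2 * Λ^2 * ‖x - y‖ := by ring
      _ = (n : ℝ) * (2 * Λ^2 * ‖x - y‖) := by
          rw [Finset.sum_const, Finset.card_univ, Fintype.card_fin, nsmul_eq_mul]
      _ = 2 * (n : ℝ) * Λ^2 * ‖x - y‖ := by ring
  -- the relaxed diffusion matrix
  have hAν : ∀ (x : EuclideanSpace ℝ (Fin n)) (l : SimplexT K),
      ((∑ k, (l.1 k) • ((σ k x) * (σ k x)ᵀ)) - ν • (1 : Matrix (Fin n) (Fin n) ℝ)).PosSemidef := by
    intro x l
    have heq : (∑ k, (l.1 k) • ((σ k x) * (σ k x)ᵀ)) - ν • (1 : Matrix (Fin n) (Fin n) ℝ)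
        = ∑ k, (l.1 k) • ((σ k x) * (σ k x)ᵀ - ν • (1 : Matrix (Fin n) (Fin n) ℝ)) := by
      simp only [smul_sub]
      rw [Finset.sum_sub_distrib, ← Finset.sum_smul, l.2.1, one_smul]
    rw [heq]
    exact psd_sum _ _ fun k _ => psd_smul (hell k x) (hl0 l k)
  have hAps : ∀ (x : EuclideanSpace ℝ (Fin n)) (l : SimplexT K),
      (∑ k, (l.1 k) • ((σ k x) * (σ k x)ᵀ)).PosSemidef := by
    intro x l
    have h1 := (hAν x l).add (psd_smul Matrix.PosSemidef.one hν.le)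
    rwa [sub_add_cancel] at h1
  have hAentry : ∀ (x : EuclideanSpace ℝ (Fin n)) (l : SimplexT K) p q,
      |(∑ k, (l.1 k) • ((σ k x) * (σ k x)ᵀ)) p q| ≤ (n : ℝ) * Λ^2 := by
    intro x l p q
    rw [Matrix.sum_apply]
    have hnl2 : (0:ℝ) ≤ (n : ℝ) * Λ^2 := by positivity
    calc |∑ k, ((l.1 k) • ((σ k x) * (σ k x)ᵀ)) p q|
        ≤ ∑ k, |l.1 k * ((σ k x) * (σ k x)ᵀ) p q| := by
          simpa [Matrix.smul_apply, smul_eq_mul] using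
            Finset.abs_sum_le_sum_abs
              (fun k => l.1 k * ((σ k x) * (σ k x)ᵀ) p q) Finset.univ
      _ ≤ ∑ k, l.1 k * ((n : ℝ) * Λ^2) := by
          refine Finset.sum_le_sum fun k _ => ?_
          rw [abs_mul, abs_of_nonneg (hl0 l k)]
          exact mul_le_mul_of_nonneg_left (hprod_sup k x p q) (hl0 l k)
      _ = (n : ℝ) * Λ^2 := by rw [← Finset.sum_mul, l.2.1, one_mul]
  have hAlip : ∀ (l : SimplexT K) (x y : EuclideanSpace ℝ (Fin n)) p q,
      |(∑ k, (l.1 k) • ((σ k x) * (σ k x)ᵀ)) p q - (∑ k, (l.1 k) • ((σ k y) * (σ k y)ᵀ)) p q|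
        ≤ 2 * (n : ℝ) * Λ^2 * ‖x - y‖ := by
    intro l x y p q
    rw [Matrix.sum_apply, Matrix.sum_apply, ← Finset.sum_sub_distrib]
    calc |∑ k, (((l.1 k) • ((σ k x) * (σ k x)ᵀ)) p q - ((l.1 k) • ((σ k y) * (σ k y)ᵀ)) p q)|
        ≤ ∑ k, |l.1 k * (((σ k x) * (σ k x)ᵀ) p q - ((σ k y) * (σ k y)ᵀ) p q)| := by
          simpa [Matrix.smul_apply, smul_eq_mul, mul_sub] using
            Finset.abs_sum_le_sum_abs
              (fun k => l.1 k * (((σ k x) * (σ k x)ᵀ) p q - ((σ k y) * (σ k y)ᵀ) p q))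
              Finset.univ
      _ ≤ ∑ k, l.1 k * (2 * (n : ℝ) * Λ^2 * ‖x - y‖) := by
          refine Finset.sum_le_sum fun k _ => ?_
          rw [abs_mul, abs_of_nonneg (hl0 l k)]
          exact mul_le_mul_of_nonneg_left (hprod_lip k x y p q) (hl0 l k)
      _ = 2 * (n : ℝ) * Λ^2 * ‖x - y‖ := by rw [← Finset.sum_mul, l.2.1, one_mul]
  have hrν : (0:ℝ) < Real.sqrt ν := Real.sqrt_pos.mpr hν
  have hlow : ∀ (x : EuclideanSpace ℝ (Fin n)) (l : SimplexT K),
      ((hAps x l).sqrt - Real.sqrt ν • (1 : Matrix (Fin n) (Fin n) ℝ)).PosSemidef :=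
    fun x l => sqrt_eigen_lb (hAps x l) hν.le (hAν x l)
  refine ⟨fun x l => ∑ k, (l.1 k) • b k x, fun x l => (hAps x l).sqrt,
    fun x l => rfl, ?_, ?_, ?_⟩
  · intro x l
    have hsq : (hAps x l).sqrt * ((hAps x l).sqrt)ᵀ = ∑ k, (l.1 k) • ((σ k x) * (σ k x)ᵀ) := by
      rw [herm_transpose_eq (hAps x l).posSemidef_sqrt.1, (hAps x l).sqrt_mul_self]
    exact ⟨posdef_of_sub_psd hrν (hlow x l), hsq⟩
  · intro bt' σt' hb' hσ'
    constructor
    · funext x l; exact hb' x l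
    · funext x l
      have h1 := (hσ' x l).1
      have h2 := (hσ' x l).2
      rw [herm_transpose_eq h1.1] at h2
      exact h1.posSemidef.eq_sqrt_of_sq_eq (hAps x l) (by rw [pow_two]; exact h2)
  · refine ⟨(∑ _i : Fin n, ∑ _j : Fin n,
        (Real.sqrt ((n : ℝ) * Λ^2) + (n : ℝ)^3 * Λ^2 / Real.sqrt ν))
        + ∑ i, ((∑ k, SB k i) + (∑ k, LB k i)), ?_, ?_⟩
    · have hterm : (0:ℝ) < Real.sqrt ((n : ℝ) * Λ^2) + (n : ℝ)^3 * Λ^2 / Real.sqrt ν := by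
        have h1 : (0:ℝ) < Real.sqrt ((n : ℝ) * Λ^2) := Real.sqrt_pos.mpr (by
          have : (0:ℝ) < (n : ℝ) := by exact_mod_cast hn
          positivity)
        have h2 : (0:ℝ) ≤ (n : ℝ)^3 * Λ^2 / Real.sqrt ν := by positivity
        linarith
      have hNe : Nonempty (Fin n) := ⟨⟨0, hn⟩⟩
      have hpos1 : (0:ℝ) < ∑ _i : Fin n, ∑ _j : Fin n,
          (Real.sqrt ((n : ℝ) * Λ^2) + (n : ℝ)^3 * Λ^2 / Real.sqrt ν) :=
        Finset.sum_pos (fun i _ => Finset.sum_pos (fun j _ => hterm) Finset.univ_nonempty)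
          Finset.univ_nonempty
      have hpos2 : (0:ℝ) ≤ ∑ i, ((∑ k, SB k i) + (∑ k, LB k i)) :=
        Finset.sum_nonneg fun i _ => add_nonneg
          (Finset.sum_nonneg fun k _ => (hbb k i).1)
          (Finset.sum_nonneg fun k _ => (hbb k i).2.1)
      linarith
    · intro l
      refine ⟨fun x => hlow x l,
        fun _ _ => Real.sqrt ((n : ℝ) * Λ^2),
        fun _ _ => (n : ℝ)^3 * Λ^2 / Real.sqrt ν,
        fun i => ∑ k, SB k i, fun i => ∑ k, LB k i, ?_, ?_, le_refl _⟩
      · intro i j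
        refine ⟨Real.sqrt_nonneg _, by positivity, ?_, ?_⟩
        · intro x
          refine sqrt_entry_bound (hAps x l).posSemidef_sqrt.1 (fun p => ?_) i j
          rw [(hAps x l).sqrt_mul_self]
          exact le_of_abs_le (hAentry x l p p)
        · intro x y
          have hbd : ∀ p q, |((∑ k, (l.1 k) • ((σ k x) * (σ k x)ᵀ))
              - (∑ k, (l.1 k) • ((σ k y) * (σ k y)ᵀ))) p q|
              ≤ 2 * (n : ℝ) * Λ^2 * ‖x - y‖ := by
            intro p q
            rw [Matrix.sub_apply]
            exact hAlip l x y p q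
          have hD : (hAps x l).sqrt * (hAps x l).sqrt - (hAps y l).sqrt * (hAps y l).sqrt
              = (∑ k, (l.1 k) • ((σ k x) * (σ k x)ᵀ))
                - (∑ k, (l.1 k) • ((σ k y) * (σ k y)ᵀ)) := by
            rw [(hAps x l).sqrt_mul_self, (hAps y l).sqrt_mul_self]
          have hmain := sqrt_diff_entry_bound (hAps x l).posSemidef_sqrt
            (hAps y l).posSemidef_sqrt hrν (hlow x l) (hlow y l) hD hbd i j
          calc |(hAps x l).sqrt i j - (hAps y l).sqrt i j|
              ≤ ((n : ℝ)^2 * (2 * (n : ℝ) * Λ^2 * ‖x - y‖)) / (2 * Real.sqrt ν) := hmain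
            _ = (n : ℝ)^3 * Λ^2 / Real.sqrt ν * ‖x - y‖ := by
                field_simp
      · intro i
        have hSBnn : (0:ℝ) ≤ ∑ k, SB k i := Finset.sum_nonneg fun k _ => (hbb k i).1
        have hLBnn : (0:ℝ) ≤ ∑ k, LB k i := Finset.sum_nonneg fun k _ => (hbb k i).2.1
        have happ : ∀ (x : EuclideanSpace ℝ (Fin n)),
            (∑ k, (l.1 k) • b k x) i = ∑ k, l.1 k * (b k x i) := by
          intro x
          exact euclid_sum_apply (fun k => l.1 k) (fun k => b k x) i
        refine ⟨hSBnn, hLBnn, ?_, ?_⟩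
        · intro x
          beta_reduce
          rw [happ x]
          calc |∑ k, l.1 k * (b k x i)| ≤ ∑ k, |l.1 k * (b k x i)| :=
              Finset.abs_sum_le_sum_abs _ _
            _ ≤ ∑ k, SB k i := by
                refine Finset.sum_le_sum fun k _ => ?_
                rw [abs_mul, abs_of_nonneg (hl0 l k)]
                calc l.1 k * |b k x i| ≤ 1 * SB k i :=
                    mul_le_mul (hl1 l k) ((hbb k i).2.2.1 x) (abs_nonneg _) zero_le_one
                  _ = SB k i := one_mul _
        · intro x y
          beta_reduce
          rw [happ x, happ y, ← Finset.sum_sub_distrib]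
          calc |∑ k, (l.1 k * (b k x i) - l.1 k * (b k y i))|
              ≤ ∑ k, |l.1 k * (b k x i - b k y i)| := by
                simpa [mul_sub] using Finset.abs_sum_le_sum_abs
                  (fun k => l.1 k * (b k x i - b k y i)) Finset.univ
            _ ≤ ∑ k, LB k i * ‖x - y‖ := by
                refine Finset.sum_le_sum fun k _ => ?_
                rw [abs_mul, abs_of_nonneg (hl0 l k)]
                calc l.1 k * |b k x i - b k y i| ≤ 1 * (LB k i * ‖x - y‖) :=
                    mul_le_mul (hl1 l k) ((hbb k i).2.2.2 x y) (abs_nonneg _) zero_le_one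
                  _ = LB k i * ‖x - y‖ := one_mul _
            _ = (∑ k, LB k i) * ‖x - y‖ := by rw [Finset.sum_mul]

end main
end

section
/- Let n₂, n₃ ∈ ℕ, and let φ₁ : ℝ² → ℝ, φ₂ : ℝ^{n₂} → ℝ, φ₃ : ℝ^{n₃} → ℝ and constants ϑ₁, ϑ₂, ϑ₃, c₁, c₂, c₃ ≥ 0 be such that each φ_i satisfies (S_loc) with constant ϑ_i and φ_i(x) ≤ max-coordinate of x + c_i for all x in its domain. Define φ : ℝ^{n₂+n₃} → ℝ by φ(x) = φ₁(φ₂(x⁽¹⁾), φ₃(x⁽²⁾)), where x⁽¹⁾ = (x₁,…,x_{n₂}) and x⁽²⁾ = (x_{n₂+1},…,x_{n₂+n₃}). Then φ satisfies (S_loc) with constant max(ϑ₂, ϑ₃, c₂+ϑ₁, c₃+ϑ₁), and φ(x) ≤ max_{1≤k≤n₂+n₃} x_k + c₁ + max(c₂, c₃) for all x ∈ ℝ^{n₂+n₃}. -/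
open scoped BigOperators

/-- `(S_loc)`: `φ : ℝᵐ → ℝ` satisfies `(S_loc)` with constant `ϑ ≥ 0` if whenever
`x_k ≥ x_j + ϑ` for all `j ≠ k`, one has `φ(x) = x_k`. -/
def SLoc {m : ℕ} (φ : (Fin m → ℝ) → ℝ) (ϑ : ℝ) : Prop :=
  ∀ (k : Fin m) (x : Fin m → ℝ), (∀ j, j ≠ k → x j + ϑ ≤ x k) → φ x = x k

/-- composition of functions satisfying `(S_loc)` and a max-coordinate
upper bound again satisfies `(S_loc)`, with constant
`max(ϑ₂, ϑ₃, c₂+ϑ₁, c₃+ϑ₁)`, and the composite is bounded by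
`max_k x_k + c₁ + max(c₂,c₃)`. -/
theorem sloc_composition (n₂ n₃ : ℕ) (hn₂ : 0 < n₂) (hn₃ : 0 < n₃)
    (φ₁ : (Fin 2 → ℝ) → ℝ) (φ₂ : (Fin n₂ → ℝ) → ℝ) (φ₃ : (Fin n₃ → ℝ) → ℝ)
    (ϑ₁ ϑ₂ ϑ₃ c₁ c₂ c₃ : ℝ)
    (hϑ₁ : 0 ≤ ϑ₁) (hϑ₂ : 0 ≤ ϑ₂) (hϑ₃ : 0 ≤ ϑ₃)
    (hc₁ : 0 ≤ c₁) (hc₂ : 0 ≤ c₂) (hc₃ : 0 ≤ c₃)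
    (hs₁ : SLoc φ₁ ϑ₁) (hs₂ : SLoc φ₂ ϑ₂) (hs₃ : SLoc φ₃ ϑ₃)
    (hb₁ : ∀ x : Fin 2 → ℝ, φ₁ x ≤ (⨆ k, x k) + c₁)
    (hb₂ : ∀ x : Fin n₂ → ℝ, φ₂ x ≤ (⨆ k, x k) + c₂)
    (hb₃ : ∀ x : Fin n₃ → ℝ, φ₃ x ≤ (⨆ k, x k) + c₃)
    (φ : (Fin (n₂ + n₃) → ℝ) → ℝ)
    (hφ : ∀ x : Fin (n₂ + n₃) → ℝ,
      φ x = φ₁ ![φ₂ (fun i => x (Fin.castAdd n₃ i)), φ₃ (fun i => x (Fin.natAdd n₂ i))]) :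
    SLoc φ (max (max ϑ₂ ϑ₃) (max (c₂ + ϑ₁) (c₃ + ϑ₁))) ∧
    ∀ x : Fin (n₂ + n₃) → ℝ, φ x ≤ (⨆ k, x k) + c₁ + max c₂ c₃ := by

  haveI : Nonempty (Fin n₂) := Fin.pos_iff_nonempty.mp hn₂
  haveI : Nonempty (Fin n₃) := Fin.pos_iff_nonempty.mp hn₃
  set ϑ := max (max ϑ₂ ϑ₃) (max (c₂ + ϑ₁) (c₃ + ϑ₁)) with hϑdef
  constructor
  · intro k x hx
    rw [hφ]
    induction k using Fin.addCases with
    | left i =>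
      have h2 : φ₂ (fun j => x (Fin.castAdd n₃ j)) = x (Fin.castAdd n₃ i) := by
        apply hs₂ i
        intro j hj
        have := hx (Fin.castAdd n₃ j) (by
          simp [Fin.ext_iff] at hj ⊢
          omega)
        have hle : ϑ₂ ≤ ϑ := le_trans (le_max_left _ _) (le_max_left _ _)
        linarith
      have h3 : φ₃ (fun j => x (Fin.natAdd n₂ j)) + ϑ₁ ≤ x (Fin.castAdd n₃ i) := by
        have hb := hb₃ (fun j => x (Fin.natAdd n₂ j))
        have hsup : (⨆ j, x (Fin.natAdd n₂ j)) ≤ x (Fin.castAdd n₃ i) - ϑ := by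
          apply ciSup_le
          intro j
          have := hx (Fin.natAdd n₂ j) (by
            simp [Fin.ext_iff]
            omega)
          linarith
        have hϑle : c₃ + ϑ₁ ≤ ϑ := le_trans (le_max_right _ _) (le_max_right _ _)
        linarith
      have := hs₁ 0 ![x (Fin.castAdd n₃ i), φ₃ (fun j => x (Fin.natAdd n₂ j))] (by
        intro j hj
        fin_cases j
        · simp at hj
        · simpa using h3)
      simpa [h2] using this
    | right i =>
      have h3 : φ₃ (fun j => x (Fin.natAdd n₂ j)) = x (Fin.natAdd n₂ i) := by
        apply hs₃ i
        intro j hj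
        have := hx (Fin.natAdd n₂ j) (by
          simp [Fin.ext_iff] at hj ⊢
          omega)
        have hle : ϑ₃ ≤ ϑ := le_trans (le_max_right _ _) (le_max_left _ _)
        linarith
      have h2 : φ₂ (fun j => x (Fin.castAdd n₃ j)) + ϑ₁ ≤ x (Fin.natAdd n₂ i) := by
        have hb := hb₂ (fun j => x (Fin.castAdd n₃ j))
        have hsup : (⨆ j, x (Fin.castAdd n₃ j)) ≤ x (Fin.natAdd n₂ i) - ϑ := by
          apply ciSup_le
          intro j
          have := hx (Fin.castAdd n₃ j) (by
            simp [Fin.ext_iff]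
            omega)
          linarith
        have hϑle : c₂ + ϑ₁ ≤ ϑ := le_trans (le_max_left _ _) (le_max_right _ _)
        linarith
      have := hs₁ 1 ![φ₂ (fun j => x (Fin.castAdd n₃ j)), x (Fin.natAdd n₂ i)] (by
        intro j hj
        fin_cases j
        · simpa using h2
        · simp at hj)
      simpa [h3] using this
  · intro x
    rw [hφ]
    have hbdd : BddAbove (Set.range x) := Set.Finite.bddAbove (Set.finite_range x)
    set a := φ₂ (fun i => x (Fin.castAdd n₃ i)) with ha
    set b := φ₃ (fun i => x (Fin.natAdd n₂ i)) with hbb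
    have hsupx : ∀ k, x k ≤ ⨆ j, x j := fun k => le_ciSup hbdd k
    have haa : a ≤ (⨆ j, x j) + c₂ := by
      refine le_trans (hb₂ _) ?_
      gcongr
      exact ciSup_le fun i => hsupx _
    have hba : b ≤ (⨆ j, x j) + c₃ := by
      refine le_trans (hb₃ _) ?_
      gcongr
      exact ciSup_le fun i => hsupx _
    refine le_trans (hb₁ _) ?_
    have hsup2 : (⨆ k, (![a, b] : Fin 2 → ℝ) k) ≤ (⨆ j, x j) + max c₂ c₃ := by
      apply ciSup_le
      intro k
      fin_cases k
      · simpa using le_trans haa (by gcongr; exact le_max_left _ _)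
      · simpa using le_trans hba (by gcongr; exact le_max_right _ _)
    linarith
end

section
/- Under (H.ρ), let U_k = {x ∈ ℝ^K : x_k > x_j for all j ≠ k}, U = ∪_{k=1}^K U_k, and let v : U → ℝ^K be defined by v(x) = e_k for x ∈ U_k. Then for every compact set C ⊂ U, the gradients ∇H_ε = ∇H(ε⁻¹ ·) converge uniformly on C to v as ε → 0⁺, i.e. sup_{x ∈ C} ‖∇H(ε⁻¹ x) − v(x)‖ → 0 as ε → 0⁺. -/
open scoped BigOperators


open InnerProductSpace in
/-- Gradient inequality for convex differentiable functions on a real inner product space. -/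
lemma grad_convex_ineq {E : Type*} [NormedAddCommGroup E] [InnerProductSpace ℝ E]
    [CompleteSpace E] {f : E → ℝ} (hconv : ConvexOn ℝ Set.univ f)
    (hd : Differentiable ℝ f) (y z : E) :
    ⟪gradient f y, z - y⟫_ℝ ≤ f z - f y := by
  set φ : ℝ → ℝ := fun t => f (AffineMap.lineMap y z t) with hφ
  have hφconv : ConvexOn ℝ Set.univ φ := by
    have := hconv.comp_affineMap (AffineMap.lineMap y z)
    exact this
  have hline : HasDerivAt (fun t : ℝ => (AffineMap.lineMap y z t : E)) (z - y) 0 := by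
    simp only [AffineMap.lineMap_apply_module]
    have h : HasDerivAt (fun t : ℝ => t • (z - y) + y) (z - y) 0 := by
      simpa using ((hasDerivAt_id (0:ℝ)).smul_const (z - y)).add_const y
    refine h.congr_of_eventuallyEq ?_
    filter_upwards with t
    module
  have hderiv : HasDerivAt φ (fderiv ℝ f y (z - y)) 0 := by
    have hy : (AffineMap.lineMap y z : ℝ →ᵃ[ℝ] E) 0 = y := by simp
    have hF : HasFDerivAt f (fderiv ℝ f y) ((AffineMap.lineMap y z : ℝ →ᵃ[ℝ] E) 0) := by
      rw [hy]; exact (hd y).hasFDerivAt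
    exact hF.comp_hasDerivAt (0:ℝ) hline
  have hslope := hφconv.le_slope_of_hasDerivAt (Set.mem_univ (0:ℝ)) (Set.mem_univ (1:ℝ))
    one_pos hderiv
  have h01 : slope φ 0 1 = f z - f y := by
    simp [slope_def_field, hφ]
  have hfd : fderiv ℝ f y (z - y) = ⟪gradient f y, z - y⟫_ℝ := by
    rw [gradient, ← toDual_apply_apply, LinearIsometryEquiv.apply_symm_apply]
  rw [← hfd]
  calc fderiv ℝ f y (z - y) ≤ slope φ 0 1 := hslope
    _ = f z - f y := h01

open InnerProductSpace in
lemma grad_close {K : ℕ} (hK : 0 < K) (H : EuclideanSpace ℝ (Fin K) → ℝ) (c₀ : ℝ)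
    (hc₀ : 0 < c₀) (hconv : ConvexOn ℝ Set.univ H) (hd : Differentiable ℝ H)
    (hH : ∀ x : EuclideanSpace ℝ (Fin K),
      H x - c₀ ≤ (⨆ k, x k) ∧ (⨆ k, x k) ≤ H x)
    (y : EuclideanSpace ℝ (Fin K)) (k : Fin K) (s : ℝ) (hs : 0 < s)
    (hgap : ∀ j, j ≠ k → y j + s ≤ y k) :
    ‖gradient H y - EuclideanSpace.single k 1‖ ≤ 2 * c₀ / s := by
  haveI : Nonempty (Fin K) := ⟨⟨0, hK⟩⟩
  have habs : ∀ (u : EuclideanSpace ℝ (Fin K)) (i : Fin K), |u i| ≤ ‖u‖ := by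
    intro u i
    have h1 : u i = ⟪EuclideanSpace.single i (1:ℝ), u⟫_ℝ := by
      simp [EuclideanSpace.inner_single_left]
    rw [h1]
    calc |⟪EuclideanSpace.single i (1:ℝ), u⟫_ℝ| ≤ ‖EuclideanSpace.single i (1:ℝ)‖ * ‖u‖ :=
      abs_real_inner_le_norm _ _
    _ = ‖u‖ := by rw [EuclideanSpace.norm_single]; simp
  have A : ∀ u : EuclideanSpace ℝ (Fin K), ‖u‖ ≤ 1 →
      ⟪gradient H y, u⟫_ℝ ≤ u k + 2 * c₀ / s := by
    intro u hu
    set t : ℝ := s / 2 with ht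
    have htpos : 0 < t := by positivity
    set z : EuclideanSpace ℝ (Fin K) := y + t • u with hz
    have h1 := grad_convex_ineq hconv hd y z
    have hzy : z - y = t • u := by simp [hz]
    have hinner : ⟪gradient H y, z - y⟫_ℝ = t * ⟪gradient H y, u⟫_ℝ := by
      rw [hzy, real_inner_smul_right]
    have hzapp : ∀ j, z j = y j + t * u j := by
      intro j; simp [hz, PiLp.add_apply, PiLp.smul_apply, smul_eq_mul]
    have hsupz : (⨆ j, z j) ≤ z k := by
      apply ciSup_le
      intro j
      rcases eq_or_ne j k with rfl | hjk
      · exact le_rfl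
      · have hg := hgap j hjk
        have h2 : |u j| ≤ 1 := le_trans (habs u j) hu
        have h3 : |u k| ≤ 1 := le_trans (habs u k) hu
        rw [hzapp j, hzapp k]
        have := abs_le.mp h2
        have := abs_le.mp h3
        nlinarith
    have hsupy : y k ≤ ⨆ j, y j :=
      le_ciSup (Set.Finite.bddAbove (Set.finite_range _)) k
    have hHz := (hH z).1
    have hHy := (hH y).2
    have hzk : z k = y k + t * u k := hzapp k
    have key : t * ⟪gradient H y, u⟫_ℝ ≤ t * u k + c₀ := by
      rw [← hinner]
      calc ⟪gradient H y, z - y⟫_ℝ ≤ H z - H y := h1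
        _ ≤ ((⨆ j, z j) + c₀) - (⨆ j, y j) := by linarith
        _ ≤ (z k + c₀) - y k := by linarith
        _ = t * u k + c₀ := by rw [hzk]; ring
    have h2cs : c₀ / t = 2 * c₀ / s := by rw [ht]; field_simp
    rw [← h2cs]
    have hstep : ⟪gradient H y, u⟫_ℝ ≤ (t * u k + c₀) / t := by
      rw [le_div_iff₀ htpos]; nlinarith [key]
    calc ⟪gradient H y, u⟫_ℝ ≤ (t * u k + c₀) / t := hstep
      _ = u k + c₀ / t := by field_simp
  set w := gradient H y - EuclideanSpace.single k 1 with hw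
  have B : ∀ u : EuclideanSpace ℝ (Fin K), ‖u‖ ≤ 1 → ⟪w, u⟫_ℝ ≤ 2 * c₀ / s := by
    intro u hu
    have hsingle : ⟪(EuclideanSpace.single k (1:ℝ) : EuclideanSpace ℝ (Fin K)), u⟫_ℝ = u k := by
      simp [EuclideanSpace.inner_single_left]
    rw [hw, inner_sub_left, hsingle]
    have := A u hu
    linarith
  rcases eq_or_ne w 0 with h0 | h0
  · rw [h0, norm_zero]; positivity
  · have hwpos : 0 < ‖w‖ := norm_pos_iff.mpr h0
    have hu : ‖(‖w‖⁻¹ • w : EuclideanSpace ℝ (Fin K))‖ ≤ 1 := by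
      rw [norm_smul, norm_inv, norm_norm, inv_mul_cancel₀ hwpos.ne']
    have := B (‖w‖⁻¹ • w) hu
    rw [real_inner_smul_right, real_inner_self_eq_norm_mul_norm] at this
    calc ‖w‖ = ‖w‖⁻¹ * (‖w‖ * ‖w‖) := by field_simp
      _ ≤ 2 * c₀ / s := this

lemma gap_uniform {K : ℕ} (C : Set (EuclideanSpace ℝ (Fin K))) (hCcpt : IsCompact C)
    (hCU : C ⊆ {x | ∃ k, ∀ j, j ≠ k → x j < x k}) :
    ∃ m > (0:ℝ), ∀ x ∈ C, ∀ k, (∀ j, j ≠ k → x j < x k) → ∀ j, j ≠ k → x j + m ≤ x k := by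
  rcases Set.eq_empty_or_nonempty C with rfl | ⟨x₀, hx₀⟩
  · exact ⟨1, one_pos, fun x hx => absurd hx (Set.notMem_empty x)⟩
  have hch : ∀ x : C, ∃ (k : Fin K) (m : ℝ), 0 < m ∧ ∀ j, j ≠ k → (x:EuclideanSpace ℝ (Fin K)) j + m < (x:EuclideanSpace ℝ (Fin K)) k := by
    rintro ⟨x, hx⟩
    obtain ⟨k, hk⟩ := hCU hx
    by_cases hs : (Finset.univ.erase k : Finset (Fin K)).Nonempty
    · refine ⟨k, (Finset.univ.erase k).inf' hs (fun j => x k - x j) / 2, ?_, ?_⟩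
      · have hpos : 0 < (Finset.univ.erase k).inf' hs (fun j => x k - x j) := by
          rw [Finset.lt_inf'_iff]
          intro j hj
          have := hk j (Finset.ne_of_mem_erase hj)
          linarith
        linarith
      · intro j hj
        have hmem : j ∈ Finset.univ.erase k := Finset.mem_erase.mpr ⟨hj, Finset.mem_univ j⟩
        have h1 : (Finset.univ.erase k).inf' hs (fun j => x k - x j) ≤ x k - x j :=
          Finset.inf'_le _ hmem
        have hpos : 0 < (Finset.univ.erase k).inf' hs (fun j => x k - x j) := by
          rw [Finset.lt_inf'_iff]
          intro j hj
          have := hk j (Finset.ne_of_mem_erase hj)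
          linarith
        linarith
    · refine ⟨k, 1, one_pos, fun j hj => absurd ?_ hs⟩
      exact ⟨j, Finset.mem_erase.mpr ⟨hj, Finset.mem_univ j⟩⟩
  choose k m hmpos hlt using hch
  set V : C → Set (EuclideanSpace ℝ (Fin K)) :=
    fun x => {y | ∀ j, j ≠ k x → y j + m x / 2 < y (k x)} with hV
  have hVopen : ∀ x : C, IsOpen (V x) := by
    intro x
    have : V x = ⋂ j : Fin K, {y : EuclideanSpace ℝ (Fin K) | j ≠ k x → y j + m x / 2 < y (k x)} := by
      ext y; simp [hV]
    rw [this]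
    apply isOpen_iInter_of_finite
    intro j
    by_cases hj : j = k x
    · simp [hj]
    · have : {y : EuclideanSpace ℝ (Fin K) | j ≠ k x → y j + m x / 2 < y (k x)} =
        {y : EuclideanSpace ℝ (Fin K) | y j + m x / 2 < y (k x)} := by
        ext y; simp [hj]
      rw [this]
      have hc1 : Continuous fun y : EuclideanSpace ℝ (Fin K) => y j + m x / 2 :=
        ((EuclideanSpace.proj j).continuous).add continuous_const
      have hc2 : Continuous fun y : EuclideanSpace ℝ (Fin K) => y (k x) :=
        (EuclideanSpace.proj (k x) : EuclideanSpace ℝ (Fin K) →L[ℝ] ℝ).continuous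
      exact isOpen_lt hc1 hc2
  have hcover : C ⊆ ⋃ x : C, V x := by
    intro y hy
    refine Set.mem_iUnion.mpr ⟨⟨y, hy⟩, ?_⟩
    intro j hj
    have h1 := hlt ⟨y, hy⟩ j hj
    have h2 := hmpos ⟨y, hy⟩
    simp only [hV, Set.mem_setOf_eq]
    linarith
  obtain ⟨t, ht⟩ := hCcpt.elim_finite_subcover V hVopen hcover
  have htne : t.Nonempty := by
    have := ht hx₀
    rw [Set.mem_iUnion₂] at this
    obtain ⟨i, hi, _⟩ := this
    exact ⟨i, hi⟩
  refine ⟨t.inf' htne (fun i => m i / 2), ?_, ?_⟩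
  · rw [gt_iff_lt, Finset.lt_inf'_iff]
    intro i _
    have := hmpos i
    linarith
  · intro y hy k' hk' j hj
    have := ht hy
    rw [Set.mem_iUnion₂] at this
    obtain ⟨i, hi, hyV⟩ := this
    have hkk : k' = k i := by
      by_contra hne
      have h1 : y k' + m i / 2 < y (k i) := hyV k' hne
      have h2 : y (k i) < y k' := hk' (k i) (fun h => hne h.symm)
      have := hmpos i
      linarith
    subst hkk
    have h1 : y j + m i / 2 < y (k i) := hyV j hj
    have h2 : t.inf' htne (fun i => m i / 2) ≤ m i / 2 := Finset.inf'_le _ hi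
    linarith

/-- Under (H.ρ), on every compact subset `C` of
`U = ∪_k U_k`, `U_k = {x : x_k > x_j ∀ j ≠ k}`, the gradients `∇H_ε = ∇H(ε⁻¹ ·)`
converge uniformly to the map `v` with `v(x) = e_k` on `U_k`, as `ε → 0⁺`. -/
theorem gradient_uniform_convergence_on_compacts (K : ℕ) (hK : 0 < K)
    (H : EuclideanSpace ℝ (Fin K) → ℝ) (c₀ : ℝ) (hc₀ : 0 < c₀)
    (hconv : ConvexOn ℝ Set.univ H) (hsmooth : ContDiff ℝ 2 H)
    (hH : ∀ x : EuclideanSpace ℝ (Fin K),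
      H x - c₀ ≤ (⨆ k, x k) ∧ (⨆ k, x k) ≤ H x)
    (C : Set (EuclideanSpace ℝ (Fin K))) (hCcpt : IsCompact C)
    (hCU : C ⊆ {x | ∃ k, ∀ j, j ≠ k → x j < x k}) :
    ∀ δ > (0:ℝ), ∃ ε₀ > (0:ℝ), ∀ ε : ℝ, 0 < ε → ε ≤ ε₀ →
      ∀ x ∈ C, ∀ k, (∀ j, j ≠ k → x j < x k) →
        ‖gradient H (ε⁻¹ • x) - EuclideanSpace.single k 1‖ < δ := by
  intro δ hδ
  obtain ⟨m, hm, hgap⟩ := gap_uniform C hCcpt hCU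
  have hd : Differentiable ℝ H := hsmooth.differentiable (by norm_num)
  refine ⟨δ * m / (4 * c₀), by positivity, ?_⟩
  intro ε hε hεε₀ x hx k hk
  have hgapx := hgap x hx k hk
  set s : ℝ := ε⁻¹ * m with hs
  have hεinv : 0 < ε⁻¹ := by positivity
  have hspos : 0 < s := by positivity
  have hgapy : ∀ j, j ≠ k → (ε⁻¹ • x : EuclideanSpace ℝ (Fin K)) j + s ≤
      (ε⁻¹ • x : EuclideanSpace ℝ (Fin K)) k := by
    intro j hj
    have h1 := hgapx j hj
    simp only [PiLp.smul_apply, smul_eq_mul, hs]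
    nlinarith
  have hb := grad_close hK H c₀ hc₀ hconv hd hH (ε⁻¹ • x) k s hspos hgapy
  have hlt : 2 * c₀ / s < δ := by
    rw [div_lt_iff₀ hspos, hs]
    have hinv : (δ * m / (4 * c₀))⁻¹ ≤ ε⁻¹ := by
      apply inv_anti₀ hε hεε₀
    have heq : (δ * m / (4 * c₀))⁻¹ = (4 * c₀) / (δ * m) := by
      rw [inv_div]
    rw [heq] at hinv
    have h2 : δ * m > 0 := by positivity
    have h3 : (4 * c₀) / (δ * m) * (δ * m) = 4 * c₀ := div_mul_cancel₀ _ h2.ne'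
    nlinarith [mul_le_mul_of_nonneg_right hinv h2.le]
  linarith [hb]
end

section
/- Let O ⊂ ℝⁿ be a nonempty bounded connected open set, ν > 0, and for each k ∈ {1,…,K} let a_k : O → symmetric n×n matrices with bounded entries and a_k(x) ≥ (ν/2) Iₙ for all x ∈ O, b_k : O → ℝⁿ bounded, c_k : O → [0,∞) bounded, and f_k : O → ℝ. Define (L_k u)(x) = Σ_{i,j} a_k^{ij}(x) ∂_{ij}u(x) + Σ_i b_k^i(x) ∂_i u(x) − c_k(x) u(x). If u₁ and u₂ are both continuous on the closure of O, twice continuously differentiable in O, satisfy max_{1≤k≤K} ((L_k u)(x) + f_k(x)) = 0 for all x ∈ O, and u₁ = u₂ on the boundary ∂O, then u₁ = u₂ on the closure of O. In particular, the Dirichlet problem for the HJB equation max_k (L_k u + f_k) = 0 in O with u = g on ∂O has at most one solution in C(cl O) ∩ C²(O). -/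
open scoped BigOperators
open Matrix

/-- First partial derivative `∂_i u(x)` in the `i`-th coordinate direction. -/
noncomputable def pd1 (n : ℕ) (u : EuclideanSpace ℝ (Fin n) → ℝ)
    (x : EuclideanSpace ℝ (Fin n)) (i : Fin n) : ℝ :=
  fderiv ℝ u x (EuclideanSpace.single i 1)

/-- Second partial derivative `∂_{ij} u(x)`. -/
noncomputable def pd2 (n : ℕ) (u : EuclideanSpace ℝ (Fin n) → ℝ)
    (x : EuclideanSpace ℝ (Fin n)) (i j : Fin n) : ℝ :=
  fderiv ℝ (fun y => fderiv ℝ u y (EuclideanSpace.single j 1)) x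
    (EuclideanSpace.single i 1)

/-- `(L u)(x) = Σ_{ij} a^{ij} ∂_{ij}u(x) + Σ_i b^i ∂_i u(x) − c u(x)`. -/
noncomputable def Lop (n : ℕ) (a : Matrix (Fin n) (Fin n) ℝ) (bv : Fin n → ℝ) (c : ℝ)
    (u : EuclideanSpace ℝ (Fin n) → ℝ) (x : EuclideanSpace ℝ (Fin n)) : ℝ :=
  (∑ i, ∑ j, a i j * pd2 n u x i j) + (∑ i, bv i * pd1 n u x i) - c * u x

section Aux

variable {n : ℕ}

lemma second_deriv_nonpos_of_isLocalMax {g : ℝ → ℝ} {s : Set ℝ} (hs : IsOpen s)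
    (h0 : (0:ℝ) ∈ s) (hg : ContDiffOn ℝ 2 g s) (hmax : IsLocalMax g 0) :
    deriv (deriv g) 0 ≤ 0 := by
  by_contra hpos
  push_neg at hpos
  have hd1 : ContDiffOn ℝ 1 (deriv g) s := hg.deriv_of_isOpen hs (by norm_num)
  have hcont2 : ContinuousOn (deriv (deriv g)) s :=
    hd1.continuousOn_deriv_of_isOpen hs le_rfl
  have hev : ∀ᶠ t in nhds (0:ℝ), t ∈ s ∧ 0 < deriv (deriv g) t ∧ g t ≤ g 0 := by
    have h1 : ∀ᶠ t in nhds (0:ℝ), t ∈ s := hs.mem_nhds h0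
    have h2 : ∀ᶠ t in nhds (0:ℝ), 0 < deriv (deriv g) t :=
      continuousAt_const.eventually_lt (hcont2.continuousAt (hs.mem_nhds h0)) hpos
    exact h1.and (h2.and hmax)
  obtain ⟨δ, hδ, hball⟩ := Metric.eventually_nhds_iff_ball.1 hev
  have hIoo : Set.Ioo (-δ) δ ⊆ Metric.ball (0:ℝ) δ := by
    rw [Real.ball_eq_Ioo]; simp
  have hmono1 : StrictMonoOn (deriv g) (Set.Ioo (-δ) δ) := by
    refine strictMonoOn_of_deriv_pos (convex_Ioo _ _) ?_ ?_
    · exact (hd1.continuousOn).mono (fun t ht => (hball t (hIoo ht)).1)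
    · intro t ht
      rw [interior_Ioo] at ht
      exact (hball t (hIoo ht)).2.1
  have hd0 : deriv g 0 = 0 := hmax.deriv_eq_zero
  have hpos' : ∀ t ∈ Set.Ioo (0:ℝ) δ, 0 < deriv g t := by
    intro t ht
    have h0m : (0:ℝ) ∈ Set.Ioo (-δ) δ := by constructor <;> simp [hδ]
    have htm : t ∈ Set.Ioo (-δ) δ := ⟨by linarith [ht.1], ht.2⟩
    have := hmono1 h0m htm ht.1
    rwa [hd0] at this
  have hmono2 : StrictMonoOn g (Set.Ico 0 δ) := by
    refine strictMonoOn_of_deriv_pos (convex_Ico _ _) ?_ ?_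
    · refine (hg.continuousOn).mono (fun t ht => ?_)
      exact (hball t (hIoo ⟨by linarith [ht.1], ht.2⟩)).1
    · intro t ht
      rw [interior_Ico] at ht
      exact hpos' t ht
  have hlt : g 0 < g (δ/2) := hmono2 ⟨le_rfl, hδ⟩ ⟨by linarith, by linarith⟩ (by linarith)
  have hle : g (δ/2) ≤ g 0 := (hball (δ/2) (hIoo ⟨by linarith, by linarith⟩)).2.2
  linarith

lemma snd_fderiv_dir_nonpos {v : EuclideanSpace ℝ (Fin n) → ℝ}
    {O : Set (EuclideanSpace ℝ (Fin n))} (hO : IsOpen O) {x₀ : EuclideanSpace ℝ (Fin n)}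
    (hx : x₀ ∈ O) (hv : ContDiffOn ℝ 2 v O) (hmax : IsLocalMax v x₀)
    (h : EuclideanSpace ℝ (Fin n)) :
    (fderiv ℝ (fderiv ℝ v) x₀ h) h ≤ 0 := by
  set α : ℝ → EuclideanSpace ℝ (Fin n) := fun t => x₀ + t • h with hα
  have hαcd : ContDiff ℝ 2 α := contDiff_const.add (contDiff_id.smul contDiff_const)
  have hα0 : α 0 = x₀ := by simp [hα]
  set s : Set ℝ := α ⁻¹' O with hsdef
  have hs : IsOpen s := hO.preimage hαcd.continuous
  have h0s : (0:ℝ) ∈ s := by simp [hsdef, hα0, hx]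
  set g : ℝ → ℝ := v ∘ α with hgdef
  have hgcd : ContDiffOn ℝ 2 g s :=
    hv.comp (hαcd.contDiffOn) (Set.mapsTo_preimage α O)
  have hgmax : IsLocalMax g 0 := by
    have hc : ContinuousAt α 0 := hαcd.continuous.continuousAt
    have := (hc.tendsto.eventually (by rw [hα0]; exact hmax) :
      ∀ᶠ t in nhds (0:ℝ), v (α t) ≤ v x₀)
    unfold g
    unfold IsLocalMax IsMaxFilter
    simpa [hα0] using this
  have key := second_deriv_nonpos_of_isLocalMax hs h0s hgcd hgmax
  have hαd : ∀ t : ℝ, HasDerivAt α h t := by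
    intro t
    have : HasDerivAt (fun u : ℝ => u • h) ((1:ℝ) • h) t := (hasDerivAt_id t).smul_const h
    simpa [hα] using this.const_add x₀
  have hg1 : ∀ t ∈ s, HasDerivAt g (fderiv ℝ v (α t) h) t := by
    intro t ht
    have hvd : DifferentiableAt ℝ v (α t) :=
      ((hv.differentiableOn (by norm_num)).differentiableAt (hO.mem_nhds ht))
    exact hvd.hasFDerivAt.comp_hasDerivAt t (hαd t)
  have hev : deriv g =ᶠ[nhds (0:ℝ)] fun t => fderiv ℝ v (α t) h := by
    filter_upwards [hs.mem_nhds h0s] with t ht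
    exact (hg1 t ht).deriv
  have hdd : DifferentiableAt ℝ (fderiv ℝ v) x₀ :=
    ((hv.contDiffAt (hO.mem_nhds hx)).fderiv_right (m := 1) (le_refl 2)).differentiableAt (by norm_num)
  have hF : HasFDerivAt (fderiv ℝ v) (fderiv ℝ (fderiv ℝ v) x₀) (α 0) := by
    rw [hα0]; exact hdd.hasFDerivAt
  have hcomp : HasDerivAt (fun t => fderiv ℝ v (α t)) (fderiv ℝ (fderiv ℝ v) x₀ h) 0 :=
    hF.comp_hasDerivAt 0 (hαd 0)
  have happ : HasDerivAt (fun t => fderiv ℝ v (α t) h) ((fderiv ℝ (fderiv ℝ v) x₀ h) h) 0 := by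
    have := hcomp.clm_apply (hasDerivAt_const (0:ℝ) h)
    simpa using this
  have e1 : deriv (deriv g) 0 = (fderiv ℝ (fderiv ℝ v) x₀ h) h := by
    rw [hev.deriv_eq, happ.deriv]
  rw [← e1]; exact key

/-- swap the two arguments of the second derivative expression -/
lemma fderiv_fderiv_apply {v : EuclideanSpace ℝ (Fin n) → ℝ} {x : EuclideanSpace ℝ (Fin n)}
    (hdd : DifferentiableAt ℝ (fderiv ℝ v) x) (w z : EuclideanSpace ℝ (Fin n)) :
    fderiv ℝ (fun y => fderiv ℝ v y z) x w = (fderiv ℝ (fderiv ℝ v) x w) z := by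
  have hc : HasFDerivAt (fun y => fderiv ℝ v y z)
      ((ContinuousLinearMap.apply ℝ ℝ z).comp (fderiv ℝ (fderiv ℝ v) x)) x :=
    (ContinuousLinearMap.apply ℝ ℝ z).hasFDerivAt.comp x hdd.hasFDerivAt
  rw [hc.fderiv]; rfl

/-- `pd2` is the bilinear second derivative applied to basis vectors. -/
lemma pd2_eq_snd_fderiv {v : EuclideanSpace ℝ (Fin n) → ℝ} {x : EuclideanSpace ℝ (Fin n)}
    (hdd : DifferentiableAt ℝ (fderiv ℝ v) x) (i j : Fin n) :
    pd2 n v x i j = (fderiv ℝ (fderiv ℝ v) x (EuclideanSpace.single i 1))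
      (EuclideanSpace.single j 1) := by
  rw [pd2, fderiv_fderiv_apply hdd]

/-- Quadratic form with a psd matrix against a nonpositive quadratic form. -/
lemma trace_mul_nonpos {A H : Matrix (Fin n) (Fin n) ℝ} (hA : A.PosSemidef)
    (hH : ∀ ξ : Fin n → ℝ, ∑ i, ∑ j, ξ i * ξ j * H i j ≤ 0) :
    ∑ i, ∑ j, A i j * H i j ≤ 0 := by
  obtain ⟨B, hB⟩ : ∃ B : Matrix (Fin n) (Fin n) ℝ, A = Bᴴ * B := by
    open scoped MatrixOrder in
    exact CStarAlgebra.nonneg_iff_eq_star_mul_self.mp hA.nonneg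
  have hAij : ∀ i j, A i j = ∑ k, B k i * B k j := by
    intro i j
    rw [hB, Matrix.mul_apply]
    simp [Matrix.conjTranspose_apply]
  calc ∑ i, ∑ j, A i j * H i j
      = ∑ i, ∑ j, ∑ k, B k i * B k j * H i j := by
        simp_rw [hAij, Finset.sum_mul]
    _ = ∑ k, ∑ i, ∑ j, B k i * B k j * H i j := by
        calc ∑ i, ∑ j, ∑ k, B k i * B k j * H i j
            = ∑ i, ∑ k, ∑ j, B k i * B k j * H i j :=
              Finset.sum_congr rfl fun i _ => Finset.sum_comm
          _ = ∑ k, ∑ i, ∑ j, B k i * B k j * H i j := Finset.sum_comm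
    _ ≤ 0 := Finset.sum_nonpos fun k _ => hH (fun i => B k i)


lemma hessian_quadform_nonpos {v : EuclideanSpace ℝ (Fin n) → ℝ}
    {O : Set (EuclideanSpace ℝ (Fin n))} (hO : IsOpen O) {x₀ : EuclideanSpace ℝ (Fin n)}
    (hx : x₀ ∈ O) (hv : ContDiffOn ℝ 2 v O) (hmax : IsLocalMax v x₀) (ξ : Fin n → ℝ) :
    ∑ i, ∑ j, ξ i * ξ j * pd2 n v x₀ i j ≤ 0 := by
  have hdd : DifferentiableAt ℝ (fderiv ℝ v) x₀ :=
    ((hv.contDiffAt (hO.mem_nhds hx)).fderiv_right (m := 1) (le_refl 2)).differentiableAt (by norm_num)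
  set h : EuclideanSpace ℝ (Fin n) := ∑ i, ξ i • EuclideanSpace.single i (1:ℝ) with hh
  have key := snd_fderiv_dir_nonpos hO hx hv hmax h
  have expand : (fderiv ℝ (fderiv ℝ v) x₀ h) h
      = ∑ i, ∑ j, ξ i * ξ j * pd2 n v x₀ i j := by
    simp_rw [pd2_eq_snd_fderiv hdd]
    have e' : ∀ (z : EuclideanSpace ℝ (Fin n)), (fderiv ℝ (fderiv ℝ v) x₀ h) z
        = ∑ i, ξ i * ((fderiv ℝ (fderiv ℝ v) x₀ (EuclideanSpace.single i 1)) z) := by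
      intro z
      rw [hh, map_sum, ContinuousLinearMap.sum_apply]
      exact Finset.sum_congr rfl fun i _ => by
        rw [_root_.map_smul, ContinuousLinearMap.smul_apply, smul_eq_mul]
    rw [e' h]
    refine Finset.sum_congr rfl fun i _ => ?_
    rw [hh, map_sum, Finset.mul_sum]
    refine Finset.sum_congr rfl fun j _ => ?_
    rw [_root_.map_smul, smul_eq_mul]
    ring
  rw [← expand]; exact key

lemma phi_hasFDerivAt (γ : ℝ) (i₀ : Fin n) (x : EuclideanSpace ℝ (Fin n)) :
    HasFDerivAt (fun y : EuclideanSpace ℝ (Fin n) => Real.exp (γ * y i₀))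
      (Real.exp (γ * x i₀) • (γ • (EuclideanSpace.proj i₀ :
        EuclideanSpace ℝ (Fin n) →L[ℝ] ℝ))) x := by
  have h0 : HasFDerivAt (fun y : EuclideanSpace ℝ (Fin n) => y i₀)
      (EuclideanSpace.proj (𝕜 := ℝ) i₀) x := ContinuousLinearMap.hasFDerivAt (EuclideanSpace.proj (𝕜 := ℝ) i₀)
  have hπ : HasFDerivAt (fun y : EuclideanSpace ℝ (Fin n) => γ * y i₀)
      (γ • (EuclideanSpace.proj i₀ : EuclideanSpace ℝ (Fin n) →L[ℝ] ℝ)) x :=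
    h0.const_mul γ
  exact hπ.exp

lemma phi_contDiff (γ : ℝ) (i₀ : Fin n) :
    ContDiff ℝ 2 (fun y : EuclideanSpace ℝ (Fin n) => Real.exp (γ * y i₀)) :=
  Real.contDiff_exp.comp ((contDiff_const.mul (EuclideanSpace.proj (𝕜 := ℝ) i₀).contDiff))

lemma phi_pd1 (γ : ℝ) (i₀ : Fin n) (x : EuclideanSpace ℝ (Fin n)) (i : Fin n) :
    pd1 n (fun y => Real.exp (γ * y i₀)) x i
      = Real.exp (γ * x i₀) * (γ * EuclideanSpace.single i (1:ℝ) i₀) := by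
  rw [pd1, (phi_hasFDerivAt γ i₀ x).fderiv]
  simp [mul_assoc]

lemma phi_pd2 (γ : ℝ) (i₀ : Fin n) (x : EuclideanSpace ℝ (Fin n)) (i j : Fin n) :
    pd2 n (fun y => Real.exp (γ * y i₀)) x i j
      = Real.exp (γ * x i₀) * (γ * EuclideanSpace.single i (1:ℝ) i₀)
          * (γ * EuclideanSpace.single j (1:ℝ) i₀) := by
  have heq : (fun y => fderiv ℝ (fun y => Real.exp (γ * y i₀)) y (EuclideanSpace.single j 1))
      = fun y : EuclideanSpace ℝ (Fin n) =>
        Real.exp (γ * y i₀) * (γ * EuclideanSpace.single j (1:ℝ) i₀) := by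
    funext y
    rw [(phi_hasFDerivAt γ i₀ y).fderiv]
    simp [mul_assoc]
  have hF : HasFDerivAt (fun y : EuclideanSpace ℝ (Fin n) =>
      Real.exp (γ * y i₀) * (γ * EuclideanSpace.single j (1:ℝ) i₀))
      ((γ * EuclideanSpace.single j (1:ℝ) i₀) •
        (Real.exp (γ * x i₀) • (γ • (EuclideanSpace.proj i₀ :
          EuclideanSpace ℝ (Fin n) →L[ℝ] ℝ)))) x :=
    (phi_hasFDerivAt γ i₀ x).mul_const _
  rw [pd2, heq, hF.fderiv]
  by_cases h1 : i₀ = j <;> by_cases h2 : i₀ = i <;>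
    simp [EuclideanSpace.single_apply, h1, h2, PiLp.proj_apply] <;>
    (try split_ifs) <;> (try simp_all) <;> (try ring)

lemma pd1_comb {f g : EuclideanSpace ℝ (Fin n) → ℝ} {x : EuclideanSpace ℝ (Fin n)}
    (hf : DifferentiableAt ℝ f x) (hg : DifferentiableAt ℝ g x) (β δ : ℝ) (i : Fin n) :
    pd1 n (fun y => f y + β * g y + δ) x i = pd1 n f x i + β * pd1 n g x i := by
  have h1 : HasFDerivAt (fun y => f y + β * g y + δ)
      (fderiv ℝ f x + β • fderiv ℝ g x) x :=
    (hf.hasFDerivAt.add (hg.hasFDerivAt.const_mul β)).add_const δ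
  rw [pd1, h1.fderiv]
  simp [pd1]

lemma pd2_comb {f g : EuclideanSpace ℝ (Fin n) → ℝ} {O : Set (EuclideanSpace ℝ (Fin n))}
    (hO : IsOpen O) {x : EuclideanSpace ℝ (Fin n)} (hx : x ∈ O)
    (hf : ContDiffOn ℝ 2 f O) (hg : ContDiffOn ℝ 2 g O) (β δ : ℝ) (i j : Fin n) :
    pd2 n (fun y => f y + β * g y + δ) x i j = pd2 n f x i j + β * pd2 n g x i j := by
  set ej : EuclideanSpace ℝ (Fin n) := EuclideanSpace.single j 1
  have dAf : DifferentiableAt ℝ (fderiv ℝ f) x :=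
    ((hf.contDiffAt (hO.mem_nhds hx)).fderiv_right (m := 1) (le_refl 2)).differentiableAt (by norm_num)
  have dAg : DifferentiableAt ℝ (fderiv ℝ g) x :=
    ((hg.contDiffAt (hO.mem_nhds hx)).fderiv_right (m := 1) (le_refl 2)).differentiableAt (by norm_num)
  have heq : (fun y => fderiv ℝ (fun y => f y + β * g y + δ) y ej)
      =ᶠ[nhds x] fun y => fderiv ℝ f y ej + β * fderiv ℝ g y ej := by
    filter_upwards [hO.mem_nhds hx] with y hy
    have hfy : DifferentiableAt ℝ f y :=
      (hf.differentiableOn (by norm_num)).differentiableAt (hO.mem_nhds hy)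
    have hgy : DifferentiableAt ℝ g y :=
      (hg.differentiableOn (by norm_num)).differentiableAt (hO.mem_nhds hy)
    have h1 : HasFDerivAt (fun y => f y + β * g y + δ)
        (fderiv ℝ f y + β • fderiv ℝ g y) y :=
      (hfy.hasFDerivAt.add (hgy.hasFDerivAt.const_mul β)).add_const δ
    rw [h1.fderiv]
    simp
  have hAf : HasFDerivAt (fun y => fderiv ℝ f y ej)
      ((ContinuousLinearMap.apply ℝ ℝ ej).comp (fderiv ℝ (fderiv ℝ f) x)) x :=
    (ContinuousLinearMap.apply ℝ ℝ ej).hasFDerivAt.comp x dAf.hasFDerivAt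
  have hAg : HasFDerivAt (fun y => fderiv ℝ g y ej)
      ((ContinuousLinearMap.apply ℝ ℝ ej).comp (fderiv ℝ (fderiv ℝ g) x)) x :=
    (ContinuousLinearMap.apply ℝ ℝ ej).hasFDerivAt.comp x dAg.hasFDerivAt
  have hsum : HasFDerivAt (fun y => fderiv ℝ f y ej + β * fderiv ℝ g y ej) _ x :=
    hAf.add (hAg.const_mul β)
  rw [pd2, heq.fderiv_eq, hsum.fderiv]
  simp only [ContinuousLinearMap.add_apply, ContinuousLinearMap.coe_smul',
    ContinuousLinearMap.coe_comp', Function.comp_apply, Pi.smul_apply, smul_eq_mul,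
    ContinuousLinearMap.apply_apply]
  rw [pd2_eq_snd_fderiv dAf, pd2_eq_snd_fderiv dAg]

lemma Lop_comb {f g : EuclideanSpace ℝ (Fin n) → ℝ} {O : Set (EuclideanSpace ℝ (Fin n))}
    (hO : IsOpen O) {x : EuclideanSpace ℝ (Fin n)} (hx : x ∈ O)
    (hf : ContDiffOn ℝ 2 f O) (hg : ContDiffOn ℝ 2 g O)
    (A : Matrix (Fin n) (Fin n) ℝ) (bv : Fin n → ℝ) (c β δ : ℝ) :
    Lop n A bv c (fun y => f y + β * g y + δ) x
      = Lop n A bv c f x + β * Lop n A bv c g x - c * δ := by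
  have hfx : DifferentiableAt ℝ f x :=
    (hf.differentiableOn (by norm_num)).differentiableAt (hO.mem_nhds hx)
  have hgx : DifferentiableAt ℝ g x :=
    (hg.differentiableOn (by norm_num)).differentiableAt (hO.mem_nhds hx)
  simp only [Lop, pd2_comb hO hx hf hg β δ, pd1_comb hfx hgx β δ]
  simp only [mul_add, Finset.sum_add_distrib]
  rw [show (∑ i, ∑ j, A i j * (β * pd2 n g x i j)) = β * ∑ i, ∑ j, A i j * pd2 n g x i j by
    rw [Finset.mul_sum]; exact Finset.sum_congr rfl fun i _ => by rw [Finset.mul_sum]; exact Finset.sum_congr rfl fun j _ => by ring,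
    show (∑ i, bv i * (β * pd1 n g x i)) = β * ∑ i, bv i * pd1 n g x i by
    rw [Finset.mul_sum]; exact Finset.sum_congr rfl fun i _ => by ring]
  ring


lemma Lop_phi (A : Matrix (Fin n) (Fin n) ℝ) (bv : Fin n → ℝ) (c γ : ℝ) (i₀ : Fin n)
    (x : EuclideanSpace ℝ (Fin n)) :
    Lop n A bv c (fun y => Real.exp (γ * y i₀)) x
      = Real.exp (γ * x i₀) * (γ^2 * A i₀ i₀ + γ * bv i₀ - c) := by
  rw [Lop]
  simp_rw [phi_pd1, phi_pd2, EuclideanSpace.single_apply]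
  simp only [mul_ite, ite_mul, mul_zero, zero_mul, mul_one, one_mul]
  rw [Finset.sum_congr rfl (fun i (_ : i ∈ Finset.univ) => Finset.sum_ite_eq Finset.univ i₀
    (fun j => if i₀ = i then A i j * (Real.exp (γ * x i₀) * γ * γ) else 0))]
  simp only [Finset.mem_univ, if_true, Finset.sum_ite_eq]
  ring

/-- positivity of the quadratic form of `a` and lower bound on diagonal entry. -/
lemma diag_ge {A : Matrix (Fin n) (Fin n) ℝ} {ν : ℝ}
    (h : (A - (ν / 2) • (1 : Matrix (Fin n) (Fin n) ℝ)).PosSemidef) (i₀ : Fin n) :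
    ν / 2 ≤ A i₀ i₀ := by
  have := h.dotProduct_mulVec_nonneg (Pi.single i₀ 1)
  have h1 : star (Pi.single i₀ 1 : Fin n → ℝ) ⬝ᵥ
      ((A - (ν/2) • (1 : Matrix (Fin n) (Fin n) ℝ)) *ᵥ Pi.single i₀ 1)
        = A i₀ i₀ - ν/2 := by
    simp [Matrix.sub_mulVec, Matrix.mulVec_single, single_dotProduct,
      Matrix.sub_apply, Matrix.smul_apply, Matrix.one_apply]
  rw [h1] at this
  linarith

lemma a_posSemidef {A : Matrix (Fin n) (Fin n) ℝ} {ν : ℝ} (hν : 0 < ν) (hsymm : A.IsSymm)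
    (h : (A - (ν / 2) • (1 : Matrix (Fin n) (Fin n) ℝ)).PosSemidef) :
    A.PosSemidef := by
  refine Matrix.PosSemidef.of_dotProduct_mulVec_nonneg ?_ ?_
  · rw [Matrix.IsHermitian, Matrix.conjTranspose_eq_transpose_of_trivial]
    exact hsymm
  · intro ξ
    have h2 := h.dotProduct_mulVec_nonneg ξ
    have e1 : star ξ ⬝ᵥ ((A - (ν/2) • (1 : Matrix (Fin n) (Fin n) ℝ)) *ᵥ ξ)
        = star ξ ⬝ᵥ (A *ᵥ ξ) - (ν/2) * (star ξ ⬝ᵥ ξ) := by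
      rw [Matrix.sub_mulVec, dotProduct_sub, Matrix.smul_mulVec,
        Matrix.one_mulVec, dotProduct_smul]
      simp
    rw [e1] at h2
    have e2 : 0 ≤ star ξ ⬝ᵥ ξ := by
      simp only [dotProduct, Pi.star_apply, star_trivial]
      exact Finset.sum_nonneg fun i _ => mul_self_nonneg _
    nlinarith

lemma coord_le_norm (x : EuclideanSpace ℝ (Fin n)) (i : Fin n) : x i ≤ ‖x‖ := by
  have h1 : |x i| ≤ ‖x‖ := by
    rw [EuclideanSpace.norm_eq, ← Real.sqrt_sq_eq_abs]
    apply Real.sqrt_le_sqrt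
    have := Finset.single_le_sum (f := fun j => ‖x j‖^2) (fun j _ => sq_nonneg _)
      (Finset.mem_univ i)
    simpa [Real.norm_eq_abs, sq_abs] using this
  exact (le_abs_self _).trans h1

lemma max_principle {K : ℕ} (hn : 0 < n) (hK : 0 < K)
    (ν : ℝ) (hν : 0 < ν)
    (O : Set (EuclideanSpace ℝ (Fin n))) (hOopen : IsOpen O)
    (hObdd : Bornology.IsBounded O)
    (a : Fin K → EuclideanSpace ℝ (Fin n) → Matrix (Fin n) (Fin n) ℝ)
    (b : Fin K → EuclideanSpace ℝ (Fin n) → Fin n → ℝ)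
    (c : Fin K → EuclideanSpace ℝ (Fin n) → ℝ)
    (ha : ∀ k, ∀ x ∈ O, (a k x).IsSymm ∧
      ((a k x) - (ν / 2) • (1 : Matrix (Fin n) (Fin n) ℝ)).PosSemidef)
    (hbbdd : ∀ k i, ∃ M : ℝ, ∀ x ∈ O, |b k x i| ≤ M)
    (hcpos : ∀ k, ∀ x ∈ O, 0 ≤ c k x)
    (hcbdd : ∀ k, ∃ M : ℝ, ∀ x ∈ O, c k x ≤ M)
    (w : EuclideanSpace ℝ (Fin n) → ℝ)
    (hwcont : ContinuousOn w (closure O)) (hwsmooth : ContDiffOn ℝ 2 w O)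
    (hL : ∀ x ∈ O, ∃ k, 0 ≤ Lop n (a k x) (b k x) (c k x) w x)
    (hw0 : ∀ x ∈ frontier O, w x = 0) :
    ∀ x ∈ closure O, w x ≤ 0 := by
  classical
  set i₀ : Fin n := ⟨0, hn⟩
  -- uniform bounds
  choose Bf hBf using fun k => hbbdd k i₀
  choose Cf hCf using hcbdd
  set B : ℝ := ∑ k, |Bf k| with hBdef
  set C : ℝ := ∑ k, |Cf k| with hCdef
  have hB0 : 0 ≤ B := Finset.sum_nonneg fun k _ => abs_nonneg _
  have hC0 : 0 ≤ C := Finset.sum_nonneg fun k _ => abs_nonneg _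
  have hB : ∀ k, ∀ x ∈ O, |b k x i₀| ≤ B := fun k x hx =>
    (hBf k x hx).trans ((le_abs_self _).trans
      (Finset.single_le_sum (f := fun k => |Bf k|) (fun k _ => abs_nonneg _)
        (Finset.mem_univ k)))
  have hC : ∀ k, ∀ x ∈ O, c k x ≤ C := fun k x hx =>
    (hCf k x hx).trans ((le_abs_self _).trans
      (Finset.single_le_sum (f := fun k => |Cf k|) (fun k _ => abs_nonneg _)
        (Finset.mem_univ k)))
  -- choice of γ
  set γ : ℝ := max 1 (2*(B+C+1)/ν) with hγdef
  have hγ1 : (1:ℝ) ≤ γ := le_max_left _ _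
  have hγpos : 0 < γ := lt_of_lt_of_le one_pos hγ1
  have hγν : 2*(B+C+1) ≤ γ * ν := by
    have := le_max_right 1 (2*(B+C+1)/ν)
    rw [div_le_iff₀ hν] at this
    linarith [this]
  have hγkey : 0 < ν/2 * γ^2 - (γ * B + C) := by nlinarith
  -- the auxiliary exponential
  set φ : EuclideanSpace ℝ (Fin n) → ℝ := fun y => Real.exp (γ * y i₀) with hφdef
  have hφpos : ∀ y, 0 < φ y := fun y => Real.exp_pos _
  have hφcd : ContDiff ℝ 2 φ := phi_contDiff γ i₀
  -- bound on φ over the closure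
  obtain ⟨R, hR⟩ := hObdd.closure.exists_norm_le
  set Eb : ℝ := Real.exp (γ * R) with hEdef
  have hEb0 : 0 < Eb := Real.exp_pos _
  have hφle : ∀ x ∈ closure O, φ x ≤ Eb := by
    intro x hx
    apply Real.exp_le_exp.2
    have := (coord_le_norm x i₀).trans (hR x hx)
    exact mul_le_mul_of_nonneg_left this (le_of_lt hγpos)
  have hcomp : IsCompact (closure O) := hObdd.isCompact_closure
  -- main estimate for fixed ε
  have main : ∀ ε : ℝ, 0 < ε → ∀ x ∈ closure O, w x + ε * φ x + (-(ε * Eb)) ≤ 0 := by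
    intro ε hε x hx
    set V : EuclideanSpace ℝ (Fin n) → ℝ := fun y => w y + ε * φ y + (-(ε * Eb)) with hVdef
    have hVcont : ContinuousOn V (closure O) :=
      (hwcont.add ((continuous_const.mul hφcd.continuous).continuousOn)).add
        continuousOn_const
    have hVsmooth : ContDiffOn ℝ 2 V O :=
      (hwsmooth.add ((contDiff_const.mul hφcd).contDiffOn)).add contDiffOn_const
    obtain ⟨z, hz, hzmax⟩ := hcomp.exists_isMaxOn ⟨x, hx⟩ hVcont
    have hVz : V z ≤ 0 := by
      by_contra hpos
      push_neg at hpos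
      have hznf : z ∉ frontier O := by
        intro hzf
        have : V z ≤ 0 := by
          have h1 := hw0 z hzf
          have h2 := hφle z (frontier_subset_closure hzf)
          simp only [hVdef, h1, zero_add]
          nlinarith
        linarith
      have hzO : z ∈ O := by
        have := hOopen.frontier_eq
        rw [this] at hznf
        simp only [Set.mem_diff, not_and, not_not] at hznf
        exact hznf hz
      have hVmax : IsLocalMax V z :=
        hzmax.isLocalMax (mem_nhds_iff.2 ⟨O, subset_closure, hOopen, hzO⟩)
      obtain ⟨k, hk⟩ := hL z hzO
      -- Lop of V at z is positive
      have hLV : Lop n (a k z) (b k z) (c k z) V z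
          = Lop n (a k z) (b k z) (c k z) w z + ε * Lop n (a k z) (b k z) (c k z) φ z
            - c k z * (-(ε * Eb)) :=
        Lop_comb hOopen hzO hwsmooth hφcd.contDiffOn (a k z) (b k z) (c k z) ε (-(ε * Eb))
      have hdiag : ν/2 ≤ a k z i₀ i₀ := diag_ge (ha k z hzO).2 i₀
      have hbz : -B ≤ b k z i₀ := by
        have := hB k z hzO
        have := abs_le.1 this
        linarith [this.1]
      have hcz : c k z ≤ C := hC k z hzO
      have hφz : Lop n (a k z) (b k z) (c k z) φ z
          = φ z * (γ^2 * a k z i₀ i₀ + γ * b k z i₀ - c k z) := Lop_phi _ _ _ _ _ _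
      have hφzpos : 0 < Lop n (a k z) (b k z) (c k z) φ z := by
        rw [hφz]
        have h1 : 0 < φ z := hφpos z
        have h2 : 0 < γ^2 * (a k z i₀ i₀) + γ * b k z i₀ - c k z := by nlinarith
        exact mul_pos h1 h2
      have hLVpos : 0 < Lop n (a k z) (b k z) (c k z) V z := by
        rw [hLV]
        have hcz0 : 0 ≤ c k z := hcpos k z hzO
        have : 0 ≤ c k z * (ε * Eb) := by positivity
        nlinarith
      -- but at an interior max it is nonpositive
      have hpd1 : ∀ i, pd1 n V z i = 0 := by
        intro i
        rw [pd1, hVmax.fderiv_eq_zero]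
        rfl
      have htrace : ∑ i, ∑ j, a k z i j * pd2 n V z i j ≤ 0 :=
        trace_mul_nonpos (a_posSemidef hν (ha k z hzO).1 (ha k z hzO).2)
          (hessian_quadform_nonpos hOopen hzO hVsmooth hVmax)
      have hcV : 0 ≤ c k z * V z := mul_nonneg (hcpos k z hzO) (le_of_lt hpos)
      have hLVnonpos : Lop n (a k z) (b k z) (c k z) V z ≤ 0 := by
        rw [Lop]
        simp only [hpd1, mul_zero, Finset.sum_const_zero, add_zero]
        linarith
      linarith
    have := hzmax hx
    calc w x + ε * φ x + (-(ε * Eb)) = V x := rfl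
      _ ≤ V z := this
      _ ≤ 0 := hVz
  -- let ε → 0
  intro x hx
  by_contra hwx
  push_neg at hwx
  have hε : 0 < w x / (2 * Eb) := by positivity
  have := main (w x / (2 * Eb)) hε x hx
  have hφx : 0 < φ x := hφpos x
  have h2 : w x ≤ (w x / (2 * Eb)) * Eb := by nlinarith
  have heq : (w x / (2 * Eb)) * Eb = w x / 2 := by field_simp
  rw [heq] at h2
  linarith

end Aux

/-- comparison/uniqueness for classical solutions of the HJB Dirichlet
problem `max_k (L_k u + f_k) = 0` in `O`: two classical solutions agreeing on `∂O`
agree on `cl O`; in particular the Dirichlet problem has at most one classical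
solution. -/
theorem hjb_dirichlet_uniqueness (n K : ℕ) (hn : 0 < n) (hK : 0 < K)
    (ν : ℝ) (hν : 0 < ν)
    (O : Set (EuclideanSpace ℝ (Fin n))) (hOopen : IsOpen O) (hOne : O.Nonempty)
    (hObdd : Bornology.IsBounded O) (hOconn : IsConnected O)
    (a : Fin K → EuclideanSpace ℝ (Fin n) → Matrix (Fin n) (Fin n) ℝ)
    (b : Fin K → EuclideanSpace ℝ (Fin n) → Fin n → ℝ)
    (c f : Fin K → EuclideanSpace ℝ (Fin n) → ℝ)
    (ha : ∀ k, ∀ x ∈ O, (a k x).IsSymm ∧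
      ((a k x) - (ν / 2) • (1 : Matrix (Fin n) (Fin n) ℝ)).PosSemidef)
    (habdd : ∀ k i j, ∃ M : ℝ, ∀ x ∈ O, |a k x i j| ≤ M)
    (hbbdd : ∀ k i, ∃ M : ℝ, ∀ x ∈ O, |b k x i| ≤ M)
    (hcpos : ∀ k, ∀ x ∈ O, 0 ≤ c k x)
    (hcbdd : ∀ k, ∃ M : ℝ, ∀ x ∈ O, c k x ≤ M)
    (u₁ u₂ : EuclideanSpace ℝ (Fin n) → ℝ)
    (h₁cont : ContinuousOn u₁ (closure O)) (h₁smooth : ContDiffOn ℝ 2 u₁ O)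
    (h₂cont : ContinuousOn u₂ (closure O)) (h₂smooth : ContDiffOn ℝ 2 u₂ O)
    (h₁eq : ∀ x ∈ O, (⨆ k, (Lop n (a k x) (b k x) (c k x) u₁ x + f k x)) = 0)
    (h₂eq : ∀ x ∈ O, (⨆ k, (Lop n (a k x) (b k x) (c k x) u₂ x + f k x)) = 0)
    (hbdry : ∀ x ∈ frontier O, u₁ x = u₂ x) :
    ∀ x ∈ closure O, u₁ x = u₂ x := by
  haveI : Nonempty (Fin K) := ⟨⟨0, hK⟩⟩
  -- the difference satisfies the hypotheses of the maximum principle, in both orders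
  have key : ∀ v₁ v₂ : EuclideanSpace ℝ (Fin n) → ℝ,
      ContinuousOn v₁ (closure O) → ContDiffOn ℝ 2 v₁ O →
      ContinuousOn v₂ (closure O) → ContDiffOn ℝ 2 v₂ O →
      (∀ x ∈ O, (⨆ k, (Lop n (a k x) (b k x) (c k x) v₁ x + f k x)) = 0) →
      (∀ x ∈ O, (⨆ k, (Lop n (a k x) (b k x) (c k x) v₂ x + f k x)) = 0) →
      (∀ x ∈ frontier O, v₁ x = v₂ x) →
      ∀ x ∈ closure O, v₁ x + (-1) * v₂ x + 0 ≤ 0 := by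
    intro v₁ v₂ hv₁c hv₁s hv₂c hv₂s hv₁e hv₂e hbd
    refine max_principle hn hK ν hν O hOopen hObdd a b c ha hbbdd hcpos hcbdd
      (fun y => v₁ y + (-1) * v₂ y + 0) ?_ ?_ ?_ ?_
    · exact (hv₁c.add ((continuousOn_const.mul hv₂c))).add continuousOn_const
    · exact (hv₁s.add ((contDiffOn_const.mul hv₂s))).add contDiffOn_const
    · intro x hx
      obtain ⟨k, hk⟩ := exists_eq_ciSup_of_finite
        (f := fun k => Lop n (a k x) (b k x) (c k x) v₁ x + f k x)
      refine ⟨k, ?_⟩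
      have h1 : Lop n (a k x) (b k x) (c k x) v₁ x + f k x = 0 := by
        rw [hk, hv₁e x hx]
      have h2 : Lop n (a k x) (b k x) (c k x) v₂ x + f k x ≤ 0 := by
        have hb : BddAbove (Set.range fun k =>
            Lop n (a k x) (b k x) (c k x) v₂ x + f k x) :=
          Set.Finite.bddAbove (Set.finite_range _)
        exact (le_ciSup hb k).trans_eq (hv₂e x hx)
      have hcomb := Lop_comb hOopen hx hv₁s hv₂s (a k x) (b k x) (c k x) (-1) 0
      rw [hcomb]
      linarith
    · intro x hx
      show v₁ x + (-1) * v₂ x + 0 = 0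
      rw [hbd x hx]
      ring
  intro x hx
  have h1 := key u₁ u₂ h₁cont h₁smooth h₂cont h₂smooth h₁eq h₂eq hbdry x hx
  have h2 := key u₂ u₁ h₂cont h₂smooth h₁cont h₁smooth h₂eq h₁eq
    (fun x hx => (hbdry x hx).symm) x hx
  linarith
end

section
/- Let H_zang : ℝ² → ℝ be defined by H_zang(x₁,x₂) = x₁ if x₂ − x₁ < −1/2; H_zang(x₁,x₂) = −(1/2)(x₁−x₂)⁴ + (3/4)(x₁−x₂)² + (x₁+x₂)/2 + 3/32 if |x₁−x₂| ≤ 1/2; and H_zang(x₁,x₂) = x₂ if x₂ − x₁ > 1/2. Then H_zang is convex and twice continuously differentiable on ℝ², it satisfies max(x₁,x₂) ≤ H_zang(x₁,x₂) ≤ max(x₁,x₂) + 3/32 for all (x₁,x₂) ∈ ℝ², and it satisfies (S_loc) with constant 1/2. -/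
open scoped BigOperators


noncomputable def zq (t : ℝ) : ℝ := -(1/2) * t^4 + (3/4) * t^2 + 3/32
noncomputable def zf (t : ℝ) : ℝ := if t ≤ -(1/2) then -t/2 else if t < 1/2 then zq t else t/2

lemma hasDerivAt_zq (x : ℝ) : HasDerivAt zq (-2*x^3 + (3/2)*x) x := by
  have h := ((HasDerivAt.const_mul (-(1/2) : ℝ) (hasDerivAt_pow 4 x)).add
    (HasDerivAt.const_mul ((3:ℝ)/4) (hasDerivAt_pow 2 x))).add_const (3/32 : ℝ)
  refine (h.congr_deriv (by push_cast; ring)).congr_of_eventuallyEq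
    (Filter.Eventually.of_forall fun y => ?_)
  simp only [zq, Pi.add_apply]

lemma hasDerivAt_glue {f g φ : ℝ → ℝ} {a d : ℝ}
    (hf : HasDerivAt f d a) (hg : HasDerivAt g d a)
    (hl : ∀ᶠ t in nhds a, t ≤ a → φ t = f t)
    (hr : ∀ᶠ t in nhds a, a ≤ t → φ t = g t) :
    HasDerivAt φ d a := by
  have hfa : φ a = f a := hl.self_of_nhds le_rfl
  have hga : φ a = g a := hr.self_of_nhds le_rfl
  have h1 : HasDerivWithinAt φ d (Set.Iic a) a := by
    refine hf.hasDerivWithinAt.congr_of_eventuallyEq ?_ hfa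
    filter_upwards [hl.filter_mono nhdsWithin_le_nhds, self_mem_nhdsWithin] with t h ht
    exact h ht
  have h2 : HasDerivWithinAt φ d (Set.Ici a) a := by
    refine hg.hasDerivWithinAt.congr_of_eventuallyEq ?_ hga
    filter_upwards [hr.filter_mono nhdsWithin_le_nhds, self_mem_nhdsWithin] with t h ht
    exact h ht
  have h3 := h1.union h2
  rw [Set.Iic_union_Ici] at h3
  exact hasDerivWithinAt_univ.mp h3

noncomputable def zf1 (t : ℝ) : ℝ :=
  if t ≤ -(1/2) then -(1/2) else if t < 1/2 then -2*t^3 + (3/2)*t else 1/2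
noncomputable def zf2 (t : ℝ) : ℝ := max (3/2 - 6*t^2) 0

lemma zf_eq_left {t : ℝ} (h : t ≤ -(1/2)) : zf t = -t/2 := if_pos h
lemma zf_eq_mid {t : ℝ} (h1 : ¬ t ≤ -(1/2)) (h2 : t < 1/2) : zf t = zq t := by
  rw [zf, if_neg h1, if_pos h2]
lemma zf_eq_right {t : ℝ} (h : (1:ℝ)/2 ≤ t) : zf t = t/2 := by
  rw [zf, if_neg (by linarith), if_neg (not_lt.2 h)]

lemma zf1_eq_left {t : ℝ} (h : t ≤ -(1/2)) : zf1 t = -(1/2) := if_pos h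
lemma zf1_eq_mid {t : ℝ} (h1 : ¬ t ≤ -(1/2)) (h2 : t < 1/2) : zf1 t = -2*t^3 + (3/2)*t := by
  rw [zf1, if_neg h1, if_pos h2]
lemma zf1_eq_right {t : ℝ} (h : (1:ℝ)/2 ≤ t) : zf1 t = 1/2 := by
  rw [zf1, if_neg (by linarith), if_neg (not_lt.2 h)]

lemma hasDerivAt_zf (x : ℝ) : HasDerivAt zf (zf1 x) x := by
  rcases lt_trichotomy x (-(1/2)) with hx | hx | hx
  · rw [zf1_eq_left hx.le]
    have h : HasDerivAt (fun t : ℝ => -t/2) (-(1/2)) x := by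
      have h0 : HasDerivAt (fun t : ℝ => -t/2) (-1/2) x := (hasDerivAt_id x).neg.div_const 2
      convert h0 using 1; norm_num
    refine h.congr_of_eventuallyEq ?_
    filter_upwards [Iio_mem_nhds hx] with t ht
    exact zf_eq_left ht.le
  · subst hx
    rw [zf1_eq_left le_rfl]
    refine hasDerivAt_glue (f := fun t : ℝ => -t/2) (g := zq) ?_ ?_ ?_ ?_
    · have h0 : HasDerivAt (fun t : ℝ => -t/2) (-1/2) (-(1/2):ℝ) := (hasDerivAt_id _).neg.div_const 2
      convert h0 using 1; norm_num
    · have := hasDerivAt_zq (-(1/2)); convert this using 1; norm_num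
    · exact Filter.Eventually.of_forall fun t ht => zf_eq_left ht
    · filter_upwards [Iio_mem_nhds (by norm_num : (-(1/2):ℝ) < 1/2)] with t ht hta
      rcases le_or_gt t (-(1/2)) with h | h
      · have : t = -(1/2) := le_antisymm h hta
        subst this; rw [zf_eq_left le_rfl, zq]; norm_num
      · exact zf_eq_mid (not_le.2 h) ht
  · rcases lt_trichotomy x (1/2) with hx2 | hx2 | hx2
    · rw [zf1_eq_mid (not_le.2 hx) hx2]
      refine (hasDerivAt_zq x).congr_of_eventuallyEq ?_
      filter_upwards [Ioo_mem_nhds hx hx2] with t ht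
      exact zf_eq_mid (not_le.2 ht.1) ht.2
    · subst hx2
      rw [zf1_eq_right le_rfl]
      refine hasDerivAt_glue (f := zq) (g := fun t : ℝ => t/2) ?_ ?_ ?_ ?_
      · have := hasDerivAt_zq (1/2); convert this using 1; norm_num
      · simpa using ((hasDerivAt_id ((1:ℝ)/2)).div_const 2)
      · filter_upwards [Ioi_mem_nhds (by norm_num : (-(1/2):ℝ) < 1/2)] with t ht hta
        rcases lt_or_ge t (1/2) with h | h
        · exact zf_eq_mid (not_le.2 ht) h
        · have : t = 1/2 := le_antisymm hta h
          subst this; rw [zf_eq_right le_rfl, zq]; norm_num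
      · exact Filter.Eventually.of_forall fun t ht => zf_eq_right ht
    · rw [zf1_eq_right hx2.le]
      have h : HasDerivAt (fun t : ℝ => t/2) ((1:ℝ)/2) x := by
        simpa using ((hasDerivAt_id x).div_const 2)
      refine h.congr_of_eventuallyEq ?_
      filter_upwards [Ioi_mem_nhds hx2] with t ht
      exact zf_eq_right ht.le

lemma hasDerivAt_mid1 (x : ℝ) : HasDerivAt (fun t : ℝ => -2*t^3 + (3/2)*t) (-6*x^2 + 3/2) x := by
  have h := (HasDerivAt.const_mul (-2 : ℝ) (hasDerivAt_pow 3 x)).add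
    (HasDerivAt.const_mul ((3:ℝ)/2) (hasDerivAt_id x))
  refine (h.congr_deriv (by push_cast; ring)).congr_of_eventuallyEq
    (Filter.Eventually.of_forall fun y => ?_)
  simp only [Pi.add_apply, id]

lemma zf2_left {t : ℝ} (h : t ≤ -(1/2)) : zf2 t = 0 := max_eq_right (by nlinarith)
lemma zf2_mid {t : ℝ} (h1 : -(1/2) ≤ t) (h2 : t ≤ 1/2) : zf2 t = 3/2 - 6*t^2 :=
  max_eq_left (by nlinarith)
lemma zf2_right {t : ℝ} (h : (1:ℝ)/2 ≤ t) : zf2 t = 0 := max_eq_right (by nlinarith)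

lemma hasDerivAt_zf1 (x : ℝ) : HasDerivAt zf1 (zf2 x) x := by
  rcases lt_trichotomy x (-(1/2)) with hx | hx | hx
  · rw [zf2_left hx.le]
    refine (hasDerivAt_const x (-(1/2):ℝ)).congr_of_eventuallyEq ?_
    filter_upwards [Iio_mem_nhds hx] with t ht
    exact zf1_eq_left ht.le
  · subst hx
    rw [zf2_left le_rfl]
    refine hasDerivAt_glue (f := fun _ : ℝ => (-(1/2):ℝ))
      (g := fun t : ℝ => -2*t^3 + (3/2)*t) ?_ ?_ ?_ ?_
    · exact hasDerivAt_const _ _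
    · have := hasDerivAt_mid1 (-(1/2)); convert this using 1; norm_num
    · exact Filter.Eventually.of_forall fun t ht => zf1_eq_left ht
    · filter_upwards [Iio_mem_nhds (by norm_num : (-(1/2):ℝ) < 1/2)] with t ht hta
      rcases le_or_gt t (-(1/2)) with h | h
      · have : t = -(1/2) := le_antisymm h hta
        subst this; rw [zf1_eq_left le_rfl]; norm_num
      · exact zf1_eq_mid (not_le.2 h) ht
  · rcases lt_trichotomy x (1/2) with hx2 | hx2 | hx2
    · rw [zf2_mid hx.le hx2.le]
      have h := hasDerivAt_mid1 x
      have h2 : HasDerivAt (fun t : ℝ => -2*t^3 + (3/2)*t) (3/2 - 6*x^2) x := by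
        convert h using 1; ring
      refine h2.congr_of_eventuallyEq ?_
      filter_upwards [Ioo_mem_nhds hx hx2] with t ht
      exact zf1_eq_mid (not_le.2 ht.1) ht.2
    · subst hx2
      rw [zf2_right le_rfl]
      refine hasDerivAt_glue (f := fun t : ℝ => -2*t^3 + (3/2)*t)
        (g := fun _ : ℝ => ((1:ℝ)/2)) ?_ ?_ ?_ ?_
      · have := hasDerivAt_mid1 (1/2); convert this using 1; norm_num
      · exact hasDerivAt_const _ _
      · filter_upwards [Ioi_mem_nhds (by norm_num : (-(1/2):ℝ) < 1/2)] with t ht hta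
        rcases lt_or_ge t (1/2) with h | h
        · exact zf1_eq_mid (not_le.2 ht) h
        · have : t = 1/2 := le_antisymm hta h
          subst this; rw [zf1_eq_right le_rfl]; norm_num
      · exact Filter.Eventually.of_forall fun t ht => zf1_eq_right ht
    · rw [zf2_right hx2.le]
      refine (hasDerivAt_const x ((1:ℝ)/2)).congr_of_eventuallyEq ?_
      filter_upwards [Ioi_mem_nhds hx2] with t ht
      exact zf1_eq_right ht.le

lemma deriv_zf : deriv zf = zf1 := funext fun x => (hasDerivAt_zf x).deriv
lemma deriv_zf1 : deriv zf1 = zf2 := funext fun x => (hasDerivAt_zf1 x).deriv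

lemma contDiff_zf : ContDiff ℝ 2 zf := by
  rw [show (2 : WithTop ℕ∞) = 1 + 1 by norm_num, contDiff_succ_iff_deriv]
  refine ⟨fun x => (hasDerivAt_zf x).differentiableAt, by simp, ?_⟩
  rw [deriv_zf, contDiff_one_iff_deriv, deriv_zf1]
  exact ⟨fun x => (hasDerivAt_zf1 x).differentiableAt,
    by unfold zf2; exact Continuous.max (by fun_prop) continuous_const⟩

lemma convexOn_zf : ConvexOn ℝ Set.univ zf := by
  refine Monotone.convexOn_univ_of_deriv (fun x => (hasDerivAt_zf x).differentiableAt) ?_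
  rw [deriv_zf]
  refine monotone_of_deriv_nonneg (fun x => (hasDerivAt_zf1 x).differentiableAt) ?_
  intro x
  rw [deriv_zf1]
  exact le_max_right _ _

lemma zf_bounds (t : ℝ) : |t|/2 ≤ zf t ∧ zf t ≤ |t|/2 + 3/32 := by
  rcases le_or_gt t (-(1/2)) with ha | ha
  · rw [zf_eq_left ha, abs_of_nonpos (by linarith)]
    constructor <;> linarith
  rcases lt_or_ge t (1/2) with hb | hb
  · rw [zf_eq_mid (not_le.2 ha) hb, zq]
    have k1 : (0:ℝ) ≤ ((1/2 - t) * (1/2 - t)) * ((1/2 - t) * (t + 3/2)) :=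
      mul_nonneg (mul_nonneg (by linarith) (by linarith))
        (mul_nonneg (by linarith) (by linarith))
    have k2 : (0:ℝ) ≤ ((1/2 + t) * (1/2 + t)) * ((1/2 + t) * (3/2 - t)) :=
      mul_nonneg (mul_nonneg (by linarith) (by linarith))
        (mul_nonneg (by linarith) (by linarith))
    rcases abs_cases t with ⟨h1, h2⟩ | ⟨h1, h2⟩ <;> rw [h1]
    · have c : (0:ℝ) ≤ 2*t^3 - 3*t + 2 := by
        nlinarith [mul_nonneg (mul_nonneg h2 h2) h2]
      constructor
      · nlinarith [k1]
      · nlinarith [mul_nonneg h2 c]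
    · have h2' : (0:ℝ) ≤ -t := by linarith
      have c : (0:ℝ) ≤ -2*t^3 + 3*t + 2 := by
        nlinarith [mul_nonneg (mul_nonneg h2' h2') h2']
      constructor
      · nlinarith [k2]
      · nlinarith [mul_nonneg h2' c]
  · rw [zf_eq_right hb, abs_of_nonneg (by linarith)]
    constructor <;> linarith


/-- the Zang smoothing `H_zang : ℝ² → ℝ` (given piecewise) is convex and
twice continuously differentiable, satisfies
`max(x₁,x₂) ≤ H_zang(x₁,x₂) ≤ max(x₁,x₂) + 3/32`, and satisfies `(S_loc)` with
constant `1/2`. -/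
theorem zang_smoothing_properties (Hz : ℝ × ℝ → ℝ)
    (h1 : ∀ x₁ x₂ : ℝ, x₂ - x₁ < -(1/2) → Hz (x₁, x₂) = x₁)
    (h2 : ∀ x₁ x₂ : ℝ, |x₁ - x₂| ≤ 1/2 →
      Hz (x₁, x₂) = -(1/2) * (x₁ - x₂)^4 + (3/4) * (x₁ - x₂)^2 + (x₁ + x₂)/2 + 3/32)
    (h3 : ∀ x₁ x₂ : ℝ, x₂ - x₁ > 1/2 → Hz (x₁, x₂) = x₂) :
    ConvexOn ℝ Set.univ Hz ∧
    ContDiff ℝ 2 Hz ∧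
    (∀ x₁ x₂ : ℝ, max x₁ x₂ ≤ Hz (x₁, x₂) ∧ Hz (x₁, x₂) ≤ max x₁ x₂ + 3/32) ∧
    (∀ x₁ x₂ : ℝ, (x₂ + 1/2 ≤ x₁ → Hz (x₁, x₂) = x₁) ∧
      (x₁ + 1/2 ≤ x₂ → Hz (x₁, x₂) = x₂)) := by
  -- Hz agrees with the global function F
  have key : ∀ x₁ x₂ : ℝ, Hz (x₁, x₂) = (x₁ + x₂)/2 + zf (x₁ - x₂) := by
    intro x₁ x₂
    rcases lt_trichotomy (x₁ - x₂) (-(1/2)) with hx | hx | hx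
    · rw [h3 x₁ x₂ (by linarith), zf_eq_left hx.le]; ring
    · rw [h2 x₁ x₂ (by rw [abs_le]; constructor <;> linarith), zf_eq_left hx.le, hx]; ring
    · rcases lt_trichotomy (x₁ - x₂) (1/2) with hx2 | hx2 | hx2
      · rw [h2 x₁ x₂ (by rw [abs_le]; constructor <;> linarith),
          zf_eq_mid (not_le.2 hx) hx2, zq]; ring
      · rw [h2 x₁ x₂ (by rw [abs_le]; constructor <;> linarith), zf_eq_right hx2.ge, hx2]; ring
      · rw [h1 x₁ x₂ (by linarith), zf_eq_right hx2.le]; ring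
  have keyF : Hz = fun p : ℝ × ℝ => (p.1 + p.2)/2 + zf (p.1 - p.2) := by
    funext p; obtain ⟨x₁, x₂⟩ := p; exact key x₁ x₂
  refine ⟨?_, ?_, ?_, ?_⟩
  · rw [keyF]
    refine ⟨convex_univ, ?_⟩
    rintro p - q - a b ha hb hab
    have h := convexOn_zf.2 (Set.mem_univ (p.1 - p.2)) (Set.mem_univ (q.1 - q.2)) ha hb hab
    simp only [smul_eq_mul] at h ⊢
    have e1 : (a • p + b • q).1 = a * p.1 + b * q.1 := rfl
    have e2 : (a • p + b • q).2 = a * p.2 + b * q.2 := rfl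
    rw [e1, e2, show a * p.1 + b * q.1 - (a * p.2 + b * q.2)
      = a * (p.1 - p.2) + b * (q.1 - q.2) by ring]
    linarith
  · rw [keyF]
    exact ((contDiff_fst.add contDiff_snd).div_const 2).add
      (contDiff_zf.comp (contDiff_fst.sub contDiff_snd))
  · intro x₁ x₂
    rw [key x₁ x₂]
    obtain ⟨hb1, hb2⟩ := zf_bounds (x₁ - x₂)
    have hm : max x₁ x₂ = (x₁ + x₂)/2 + |x₁ - x₂|/2 := by
      rcases le_total x₁ x₂ with h | h
      · rw [max_eq_right h, abs_of_nonpos (by linarith)]; ring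
      · rw [max_eq_left h, abs_of_nonneg (by linarith)]; ring
    rw [hm]; constructor <;> linarith
  · intro x₁ x₂
    constructor
    · intro h
      rw [key x₁ x₂, zf_eq_right (by linarith)]; ring
    · intro h
      rw [key x₁ x₂, zf_eq_left (by linarith)]; ring
end
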